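/- arXiv:1706.07948 — 3 statements merged into one kernel-verified Lean document; each statement's English description precedes it below -/
import Mathlib

section
/- Let 𝔥 and 𝓗 be complex Hilbert spaces and let U : 𝔥 ⊕ 𝓗 → 𝔥 ⊕ 𝓗 be a unitary operator, written in block form U = [[T, F], [G, H]] with T ∈ 𝓑(𝔥), F ∈ 𝓑(𝓗,𝔥), G ∈ 𝓑(𝔥,𝓗), H ∈ 𝓑(𝓗). Then the following four conditions are equivalent: (i) ran(I−H) + ran G = 𝓗; (ii) ran(I−H*) + ran F* = 𝓗; (iii) ran(I−H) = 𝓗; (iv) ran(I−H*) = 𝓗. -/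
noncomputable section

open Filter Topology

namespace BT

local notation "⟪" x ", " y "⟫" => @inner ℂ _ _ x y

section Ops
variable {α β γ' : Type*}

def domR (T : Set (α × β)) : Set α := {x | ∃ y, (x, y) ∈ T}
def ranR (T : Set (α × β)) : Set β := {y | ∃ x, (x, y) ∈ T}
def kerR [Zero β] (T : Set (α × β)) : Set α := {x | (x, (0 : β)) ∈ T}
def mulR [Zero α] (T : Set (α × β)) : Set β := {y | ((0 : α), y) ∈ T}
def invR (T : Set (α × β)) : Set (β × α) := {p | (p.2, p.1) ∈ T}
def compR (T₂ : Set (β × γ')) (T₁ : Set (α × β)) : Set (α × γ') :=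
  {p | ∃ y, (p.1, y) ∈ T₁ ∧ (y, p.2) ∈ T₂}
def csum [Add α] [Add β] (T₁ T₂ : Set (α × β)) : Set (α × β) :=
  {p | ∃ q ∈ T₁, ∃ r ∈ T₂, p = (q.1 + r.1, q.2 + r.2)}

def IsLinRel {M : Type*} [AddCommGroup M] [Module ℂ M] (s : Set M) : Prop :=
  ∃ p : Submodule ℂ M, (p : Set M) = s

def IsBddRel [Norm α] [Norm β] (T : Set (α × β)) : Prop :=
  ∃ C : ℝ, ∀ p ∈ T, ‖p.2‖ ≤ C * ‖p.1‖

def BddInv [NormedAddCommGroup α] (T : Set (α × α)) : Prop :=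
  (∀ v, ∃ p ∈ T, p.2 = v) ∧ (∀ p ∈ T, ∀ q ∈ T, p.2 = q.2 → p.1 = q.1) ∧
    ∃ C : ℝ, ∀ p ∈ T, ‖p.1‖ ≤ C * ‖p.2‖
end Ops

section Shifts
variable {α : Type*} [AddCommGroup α] [Module ℂ α]

def shiftSub (T : Set (α × α)) (l : ℂ) : Set (α × α) :=
  {p | ∃ q ∈ T, p = (q.1, q.2 - l • q.1)}
def shiftAdd (T : Set (α × α)) (l : ℂ) : Set (α × α) :=
  {p | ∃ q ∈ T, p = (q.1, q.2 + l • q.1)}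
def hatN (T : Set (α × α)) (l : ℂ) : Set (α × α) := {p ∈ T | p.2 = l • p.1}
def Nlam (T : Set (α × α)) (l : ℂ) : Set α := {f | (f, l • f) ∈ T}
def Hrel (A0s : Set (α × α)) (l : ℂ) : Set (α × (α × α)) :=
  {q | q.2 ∈ A0s ∧ q.2.2 - l • q.2.1 = q.1}
end Shifts

section InnerDefs
variable {E F : Type*} [NormedAddCommGroup E] [InnerProductSpace ℂ E]
  [NormedAddCommGroup F] [InnerProductSpace ℂ F]

def adjR (S : Set (F × E)) : Set (E × F) :=
  {p | ∀ q ∈ S, ⟪p.1, q.2⟫ = ⟪p.2, q.1⟫}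

def IsClosedSymRel (A : Set (E × E)) : Prop :=
  IsLinRel A ∧ IsClosed A ∧ A ⊆ adjR A

def kIP (p q : E × E) : ℂ := -Complex.I * ⟪q.1, p.2⟫ + Complex.I * ⟪q.2, p.1⟫

def kreinOrth (S : Set (E × E)) : Set (E × E) := {v | ∀ u ∈ S, kIP u v = 0}

def GreenPair (Γ : Set ((E × E) × (F × F))) : Prop :=
  ∀ p ∈ Γ, ∀ q ∈ Γ,
    ⟪q.1.1, p.1.2⟫ - ⟪q.1.2, p.1.1⟫ = ⟪q.2.1, p.2.2⟫ - ⟪q.2.2, p.2.1⟫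

def G0 (Γ : Set ((E × E) × (F × F))) : Set ((E × E) × F) := {p | ∃ h', (p.1, (p.2, h')) ∈ Γ}
def G1 (Γ : Set ((E × E) × (F × F))) : Set ((E × E) × F) := {p | ∃ h, (p.1, (h, p.2)) ∈ Γ}
def A0 (Γ : Set ((E × E) × (F × F))) : Set (E × E) := kerR (G0 Γ)
def A1 (Γ : Set ((E × E) × (F × F))) : Set (E × E) := kerR (G1 Γ)
def weyl (Γ : Set ((E × E) × (F × F))) (l : ℂ) : Set (F × F) :=
  {p | ∃ f : E, ((f, l • f), p) ∈ Γ}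
def gfield (Γ : Set ((E × E) × (F × F))) (l : ℂ) : Set (F × E) :=
  {p | ∃ h', ((p.2, l • p.2), (p.1, h')) ∈ Γ}

def kreinAdj (Γ : Set ((E × E) × (F × F))) : Set ((F × F) × (E × E)) :=
  {q | ∀ p ∈ Γ, kIP p.1 q.2 = kIP p.2 q.1}

def IsIsomPair (A : Set (E × E)) (Γ : Set ((E × E) × (F × F))) : Prop :=
  IsLinRel Γ ∧ domR Γ ⊆ adjR A ∧ GreenPair Γ
def IsDomDense (A : Set (E × E)) (Γ : Set ((E × E) × (F × F))) : Prop :=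
  closure (domR Γ) = adjR A
def IsABPair (A : Set (E × E)) (Γ : Set ((E × E) × (F × F))) : Prop :=
  IsIsomPair A Γ ∧ IsDomDense A Γ ∧ Dense (ranR (G0 Γ)) ∧ A0 Γ = adjR (A0 Γ)
def IsBPair (A : Set (E × E)) (Γ : Set ((E × E) × (F × F))) : Prop :=
  IsABPair A Γ ∧ ranR (G0 Γ) = Set.univ
def IsUnitaryPair (A : Set (E × E)) (Γ : Set ((E × E) × (F × F))) : Prop :=
  GreenPair Γ ∧ domR Γ ⊆ adjR A ∧ IsDomDense A Γ ∧ invR Γ = kreinAdj Γ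
def IsUnitaryBT (A : Set (E × E)) (Γ : Set ((E × E) × (F × F))) : Prop :=
  IsUnitaryPair A Γ ∧ mulR Γ = {0}
def IsOrdinaryBT (A : Set (E × E)) (Γ : Set ((E × E) × (F × F))) : Prop :=
  IsIsomPair A Γ ∧ mulR Γ = {0} ∧ domR Γ = adjR A ∧ ranR Γ = Set.univ

def Erel (Γ : Set ((E × E) × (F × F))) (m : ℂ) : Set (F × F) :=
  {p | ∃ u' v', (p.1, u') ∈ weyl Γ m ∧ (p.1, v') ∈ weyl Γ ((starRingEnd ℂ) m) ∧
        p.2 = (2 : ℂ)⁻¹ • (u' + v')}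

def triTransform (Γ : Set ((E × E) × (F × F))) (e : Set (F × F)) :
    Set ((E × E) × (F × F)) :=
  {q | ∃ h h' w, (q.1, (h, h')) ∈ Γ ∧ (h, w) ∈ e ∧ q.2 = (h, w + h')}

def formVal (l : ℂ) (u u' : F) : ℝ :=
  ((l - (starRingEnd ℂ) l)⁻¹ * (⟪u, u'⟫ - ⟪u', u⟫)).re

def FormClosable (l : ℂ) (Ms : Set (F × F)) : Prop :=
  ∀ u u' : ℕ → F, (∀ n, (u n, u' n) ∈ Ms) →
    Tendsto u atTop (nhds (0 : F)) →
    Tendsto (fun nm : ℕ × ℕ => formVal l (u nm.1 - u nm.2) (u' nm.1 - u' nm.2)) atTop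
      (nhds (0 : ℝ)) →
    Tendsto (fun n => formVal l (u n) (u' n)) atTop (nhds (0 : ℝ))

def formClosureDom (l : ℂ) (Ms : Set (F × F)) : Set F :=
  {v | ∃ u u' : ℕ → F, (∀ n, (u n, u' n) ∈ Ms) ∧ Tendsto u atTop (nhds v) ∧
    Tendsto (fun nm : ℕ × ℕ => formVal l (u nm.1 - u nm.2) (u' nm.1 - u' nm.2)) atTop
      (nhds (0 : ℝ))}

end InnerDefs

section CompleteDefs
variable {F : Type*} [NormedAddCommGroup F] [InnerProductSpace ℂ F] [CompleteSpace F]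

def IsNevFun (M₀ : ℂ → F →L[ℂ] F) : Prop :=
  DifferentiableOn ℂ M₀ {l : ℂ | l.im ≠ 0} ∧
  (∀ l : ℂ, l.im ≠ 0 → M₀ ((starRingEnd ℂ) l) = ContinuousLinearMap.adjoint (M₀ l)) ∧
  (∀ l : ℂ, 0 < l.im → ∀ u, 0 ≤ (⟪u, M₀ l u⟫).im)

def ImOp (Tb : F →L[ℂ] F) : F →L[ℂ] F :=
  ((2 : ℂ) * Complex.I)⁻¹ • (Tb - ContinuousLinearMap.adjoint Tb)

end CompleteDefs

variable {E F : Type*} [NormedAddCommGroup E] [InnerProductSpace ℂ E] [CompleteSpace E]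
  [NormedAddCommGroup F] [InnerProductSpace ℂ F] [CompleteSpace F]


open ContinuousLinearMap in
set_option maxHeartbeats 1000000 in
/-- A coercive bounded operator on a complex Hilbert space is surjective. -/
lemma surj_of_coercive' {F : Type*} [NormedAddCommGroup F] [InnerProductSpace ℂ F]
    [CompleteSpace F] (A : F →L[ℂ] F) (c : ℝ) (hc : 0 < c)
    (hco : ∀ u : F, c * ‖u‖ ^ 2 ≤ RCLike.re (⟪u, A u⟫ : ℂ)) :
    Function.Surjective A := by
  have hb : ∀ u : F, c * ‖u‖ ≤ ‖A u‖ := by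
    intro u
    rcases eq_or_ne u 0 with rfl | hu
    · simp
    · have h1 : c * ‖u‖ * ‖u‖ ≤ ‖A u‖ * ‖u‖ := by
        calc c * ‖u‖ * ‖u‖ = c * ‖u‖ ^ 2 := by ring
          _ ≤ RCLike.re (⟪u, A u⟫ : ℂ) := hco u
          _ ≤ ‖u‖ * ‖A u‖ := re_inner_le_norm u (A u)
          _ = ‖A u‖ * ‖u‖ := by ring
      exact le_of_mul_le_mul_right h1 (norm_pos_iff.mpr hu)
  have hanti : AntilipschitzWith (⟨c, hc.le⟩ : NNReal)⁻¹ A := by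
    apply A.antilipschitz_of_bound
    intro x
    have hci : (((⟨c, hc.le⟩ : NNReal)⁻¹ : NNReal) : ℝ) = c⁻¹ := NNReal.coe_inv _
    refine le_of_le_of_eq ?_ (congrArg (fun t => t * ‖A x‖) hci.symm)
    calc ‖x‖ = c⁻¹ * (c * ‖x‖) := by field_simp
      _ ≤ c⁻¹ * ‖A x‖ := mul_le_mul_of_nonneg_left (hb x) (inv_nonneg.mpr hc.le)
  have hclosed : IsClosed (Set.range ⇑A) := hanti.isClosed_range A.uniformContinuous
  have hcl : IsClosed ((LinearMap.range (A : F →ₗ[ℂ] F) : Submodule ℂ F) : Set F) := by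
    rw [LinearMap.coe_range]; exact hclosed
  haveI : CompleteSpace (LinearMap.range (A : F →ₗ[ℂ] F)) := hcl.completeSpace_coe
  have htop : LinearMap.range (A : F →ₗ[ℂ] F) = ⊤ := by
    rw [← Submodule.orthogonal_orthogonal (LinearMap.range (A : F →ₗ[ℂ] F)), Submodule.eq_top_iff']
    intro v
    rw [Submodule.mem_orthogonal]
    intro w hw
    have h0 : (⟪A w, w⟫ : ℂ) = 0 := hw (A w) (LinearMap.mem_range_self _ w)
    have h1 : c * ‖w‖ ^ 2 ≤ 0 := by
      have h2 := hco w
      rw [inner_re_symm w (A w), h0] at h2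
      simpa using h2
    have hw0 : w = 0 := by
      by_contra hne
      have hpos : 0 < ‖w‖ := norm_pos_iff.mpr hne
      nlinarith [h1, mul_pos hc (mul_pos hpos hpos)]
    simp [hw0]
  intro y
  exact LinearMap.mem_range.mp (htop ▸ Submodule.mem_top (x := y))

open ContinuousLinearMap in
set_option maxHeartbeats 1000000 in
/-- Coercivity of `Re (I - A)` from surjectivity of `(u,v) ↦ (u - A u) + B v`,
given the unitarity-type identity `B B* + A A* = I`. -/
lemma coercive_of_rangesum' {E F : Type*} [NormedAddCommGroup E] [InnerProductSpace ℂ E]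
    [CompleteSpace E] [NormedAddCommGroup F] [InnerProductSpace ℂ F] [CompleteSpace F]
    (A : F →L[ℂ] F) (B : E →L[ℂ] F)
    (hid : ∀ w : F, B (adjoint B w) + A (adjoint A w) = w)
    (hsurj : {w : F | ∃ (u : F) (v : E), w = (u - A u) + B v} = Set.univ) :
    ∃ c : ℝ, 0 < c ∧ ∀ w : F, c * ‖w‖ ^ 2 ≤ RCLike.re (⟪w, w - A w⟫ : ℂ) := by
  set S : F × E →L[ℂ] F := (ContinuousLinearMap.id ℂ F - A).coprod B with hSdef
  have hSsurj : Function.Surjective S := by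
    intro w
    have hmem : w ∈ {w : F | ∃ (u : F) (v : E), w = (u - A u) + B v} :=
      hsurj ▸ Set.mem_univ w
    obtain ⟨u, v, huv⟩ := hmem
    refine ⟨(u, v), ?_⟩
    rw [hSdef, huv]
    simp [coprod_apply]
  obtain ⟨C, hC, hpre⟩ := S.exists_preimage_norm_le hSsurj
  have hkey : ∀ w : F, ‖w - adjoint A w‖ ^ 2 + ‖adjoint B w‖ ^ 2
      = 2 * RCLike.re (⟪w, w - A w⟫ : ℂ) := by
    intro w
    have h2 : (⟪w, B (adjoint B w)⟫ : ℂ) + ⟪w, A (adjoint A w)⟫ = ⟪w, w⟫ := by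
      rw [← inner_add_right, hid w]
    have h3 : (⟪adjoint B w, adjoint B w⟫ : ℂ) = ⟪w, B (adjoint B w)⟫ :=
      adjoint_inner_left B (adjoint B w) w
    have h4 : (⟪adjoint A w, adjoint A w⟫ : ℂ) = ⟪w, A (adjoint A w)⟫ :=
      adjoint_inner_left A (adjoint A w) w
    have h5 : ‖adjoint B w‖ ^ 2 + ‖adjoint A w‖ ^ 2 = ‖w‖ ^ 2 := by
      rw [← inner_self_eq_norm_sq (𝕜 := ℂ) (adjoint B w),
        ← inner_self_eq_norm_sq (𝕜 := ℂ) (adjoint A w),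
        ← inner_self_eq_norm_sq (𝕜 := ℂ) w, h3, h4, ← map_add, h2]
    have h6 : ‖w - adjoint A w‖ ^ 2
        = ‖w‖ ^ 2 - 2 * RCLike.re (⟪w, adjoint A w⟫ : ℂ) + ‖adjoint A w‖ ^ 2 :=
      norm_sub_sq (𝕜 := ℂ) w (adjoint A w)
    have h7 : RCLike.re (⟪w, adjoint A w⟫ : ℂ) = RCLike.re (⟪w, A w⟫ : ℂ) := by
      rw [adjoint_inner_right, inner_re_symm]
    have h8 : RCLike.re (⟪w, w - A w⟫ : ℂ)
        = ‖w‖ ^ 2 - RCLike.re (⟪w, A w⟫ : ℂ) := by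
      rw [inner_sub_right, map_sub, inner_self_eq_norm_sq]
    rw [h6, h7, h8]
    linarith
  refine ⟨(8 * C ^ 2)⁻¹, by positivity, fun w => ?_⟩
  obtain ⟨x, hx, hnx⟩ := hpre w
  set K := RCLike.re (⟪w, w - A w⟫ : ℂ) with hKdef
  have hK0 : 0 ≤ K := by
    linarith [hkey w, sq_nonneg ‖w - adjoint A w‖, sq_nonneg ‖adjoint B w‖]
  set s := Real.sqrt (2 * K) with hs
  have hs0 : 0 ≤ s := Real.sqrt_nonneg _
  have hs2 : s ^ 2 = 2 * K := Real.sq_sqrt (by linarith)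
  have h1 : ‖w - adjoint A w‖ ≤ s := by
    calc ‖w - adjoint A w‖ = Real.sqrt (‖w - adjoint A w‖ ^ 2) :=
          (Real.sqrt_sq (norm_nonneg _)).symm
      _ ≤ s := Real.sqrt_le_sqrt (by linarith [hkey w, sq_nonneg ‖adjoint B w‖])
  have h2 : ‖adjoint B w‖ ≤ s := by
    calc ‖adjoint B w‖ = Real.sqrt (‖adjoint B w‖ ^ 2) :=
          (Real.sqrt_sq (norm_nonneg _)).symm
      _ ≤ s := Real.sqrt_le_sqrt (by linarith [hkey w, sq_nonneg ‖w - adjoint A w‖])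
  have hx' : x.1 - A x.1 + B x.2 = w := by
    have := hx
    simpa [hSdef, coprod_apply] using this
  have e1 : (⟪w, w⟫ : ℂ) = ⟪w - adjoint A w, x.1⟫ + ⟪adjoint B w, x.2⟫ := by
    conv_lhs => rw [← hx']
    rw [inner_add_right, inner_sub_right, inner_sub_left,
      adjoint_inner_left A, adjoint_inner_left B, hx']
  have hw2 : ‖w‖ ^ 2 ≤ s * (2 * C) * ‖w‖ := by
    calc ‖w‖ ^ 2 = RCLike.re (⟪w, w⟫ : ℂ) := (inner_self_eq_norm_sq (𝕜 := ℂ) w).symm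
      _ = RCLike.re (⟪w - adjoint A w, x.1⟫ : ℂ) + RCLike.re (⟪adjoint B w, x.2⟫ : ℂ) := by
          rw [e1, map_add]
      _ ≤ ‖w - adjoint A w‖ * ‖x.1‖ + ‖adjoint B w‖ * ‖x.2‖ :=
          add_le_add (re_inner_le_norm _ _) (re_inner_le_norm _ _)
      _ ≤ s * ‖x‖ + s * ‖x‖ :=
          add_le_add (mul_le_mul h1 (norm_fst_le x) (norm_nonneg _) hs0)
            (mul_le_mul h2 (norm_snd_le x) (norm_nonneg _) hs0)
      _ ≤ s * (C * ‖w‖) + s * (C * ‖w‖) :=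
          add_le_add (mul_le_mul_of_nonneg_left hnx hs0)
            (mul_le_mul_of_nonneg_left hnx hs0)
      _ = s * (2 * C) * ‖w‖ := by ring
  have h8 : ‖w‖ ^ 2 ≤ 8 * C ^ 2 * K := by
    nlinarith [sq_nonneg (‖w‖ - 2 * C * s), hw2, hs2]
  calc (8 * C ^ 2)⁻¹ * ‖w‖ ^ 2 ≤ (8 * C ^ 2)⁻¹ * (8 * C ^ 2 * K) :=
        mul_le_mul_of_nonneg_left h8 (by positivity)
    _ = K := by field_simp

open ContinuousLinearMap in
set_option maxHeartbeats 1000000 in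
lemma both_surj_of_coercive' {F : Type*} [NormedAddCommGroup F] [InnerProductSpace ℂ F]
    [CompleteSpace F] (H : F →L[ℂ] F) (c : ℝ) (hc : 0 < c)
    (hco : ∀ u : F, c * ‖u‖ ^ 2 ≤ RCLike.re (⟪u, u - H u⟫ : ℂ)) :
    Function.Surjective (fun u : F => u - H u) ∧
      Function.Surjective (fun u : F => u - adjoint H u) := by
  have e : ∀ u : F, RCLike.re (⟪u, u - adjoint H u⟫ : ℂ) = RCLike.re (⟪u, u - H u⟫ : ℂ) := by
    intro u
    rw [inner_sub_right, inner_sub_right, map_sub, map_sub, adjoint_inner_right,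
      inner_re_symm (H u) u]
  constructor
  · have hs := surj_of_coercive' (ContinuousLinearMap.id ℂ F - H) c hc
      (fun u => by simpa using hco u)
    intro w; obtain ⟨u, hu⟩ := hs w; exact ⟨u, by simpa using hu⟩
  · have hs := surj_of_coercive' (ContinuousLinearMap.id ℂ F - adjoint H) c hc
      (fun u => by
        have h := hco u
        rw [← e u] at h
        simpa using h)
    intro w; obtain ⟨u, hu⟩ := hs w; exact ⟨u, by simpa using hu⟩

open ContinuousLinearMap in
/-- for a unitary block operator `U = [[T, F], [G, H]]` on `𝔥 ⊕ 𝓗`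
(unitarity expressed through the eight block identities of `U*U = I` and `UU* = I`),
the four range conditions are equivalent. -/
theorem statement12 (T : E →L[ℂ] E) (Fo : F →L[ℂ] E) (G : E →L[ℂ] F) (H : F →L[ℂ] F)
    (h1 : (adjoint T).comp T + (adjoint G).comp G = ContinuousLinearMap.id ℂ E)
    (h2 : (adjoint T).comp Fo + (adjoint G).comp H = 0)
    (h3 : (adjoint Fo).comp T + (adjoint H).comp G = 0)
    (h4 : (adjoint Fo).comp Fo + (adjoint H).comp H = ContinuousLinearMap.id ℂ F)
    (h5 : T.comp (adjoint T) + Fo.comp (adjoint Fo) = ContinuousLinearMap.id ℂ E)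
    (h6 : T.comp (adjoint G) + Fo.comp (adjoint H) = 0)
    (h7 : G.comp (adjoint T) + H.comp (adjoint Fo) = 0)
    (h8 : G.comp (adjoint G) + H.comp (adjoint H) = ContinuousLinearMap.id ℂ F) :
    (({w : F | ∃ (u : F) (v : E), w = (u - H u) + G v} = Set.univ) ↔
       ({w : F | ∃ (u : F) (v : E), w = (u - adjoint H u) + adjoint Fo v} = Set.univ)) ∧
    (({w : F | ∃ (u : F) (v : E), w = (u - H u) + G v} = Set.univ) ↔
       Function.Surjective (fun u : F => u - H u)) ∧
    (({w : F | ∃ (u : F) (v : E), w = (u - H u) + G v} = Set.univ) ↔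
       Function.Surjective (fun u : F => u - adjoint H u)) := by
  -- trivial directions
  have hPC_PA : Function.Surjective (fun u : F => u - H u) →
      {w : F | ∃ (u : F) (v : E), w = (u - H u) + G v} = Set.univ := by
    intro hs
    ext w
    simp only [Set.mem_setOf_eq, Set.mem_univ, iff_true]
    obtain ⟨u, hu⟩ := hs w
    exact ⟨u, 0, by simp [hu]⟩
  have hPD_PB : Function.Surjective (fun u : F => u - adjoint H u) →
      {w : F | ∃ (u : F) (v : E), w = (u - adjoint H u) + adjoint Fo v} = Set.univ := by
    intro hs
    ext w
    simp only [Set.mem_setOf_eq, Set.mem_univ, iff_true]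
    obtain ⟨u, hu⟩ := hs w
    exact ⟨u, 0, by simp [hu]⟩
  -- main implications
  have hA : {w : F | ∃ (u : F) (v : E), w = (u - H u) + G v} = Set.univ →
      Function.Surjective (fun u : F => u - H u) ∧
        Function.Surjective (fun u : F => u - adjoint H u) := by
    intro hs
    obtain ⟨c, hc, hco⟩ := coercive_of_rangesum' H G
      (fun w => by
        have h := ContinuousLinearMap.ext_iff.mp h8 w
        simpa using h) hs
    exact both_surj_of_coercive' H c hc hco
  have hB : {w : F | ∃ (u : F) (v : E), w = (u - adjoint H u) + adjoint Fo v} = Set.univ →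
      Function.Surjective (fun u : F => u - H u) ∧
        Function.Surjective (fun u : F => u - adjoint H u) := by
    intro hs
    obtain ⟨c, hc, hco⟩ := coercive_of_rangesum' (adjoint H) (adjoint Fo)
      (fun w => by
        have h := ContinuousLinearMap.ext_iff.mp h4 w
        simpa [ContinuousLinearMap.adjoint_adjoint] using h) hs
    have hco' : ∀ u : F, c * ‖u‖ ^ 2 ≤ RCLike.re (⟪u, u - H u⟫ : ℂ) := by
      intro u
      have e : RCLike.re (⟪u, u - adjoint H u⟫ : ℂ) = RCLike.re (⟪u, u - H u⟫ : ℂ) := by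
        rw [inner_sub_right, inner_sub_right, map_sub, map_sub, adjoint_inner_right,
          inner_re_symm (H u) u]
      rw [← e]
      exact hco u
    exact both_surj_of_coercive' H c hc hco'
  exact ⟨⟨fun a => hPD_PB (hA a).2, fun b => hPC_PA (hB b).1⟩,
    ⟨fun a => (hA a).1, hPC_PA⟩,
    ⟨fun a => (hA a).2, fun d => hPC_PA (hB (hPD_PB d)).1⟩⟩

end BT
end
end

section
/- Let {𝓗,Γ₀,Γ₁} be a unitary boundary triple for A* with T = dom Γ, and for λ ∈ ℂ∖ℝ let γ̂(λ) := {(Γ₀f̂, f̂) : f̂ ∈ N̂_λ(T)} ⊆ 𝓗 × (𝔥×𝔥). Then the closure of γ̂(λ) (in 𝓗 × (𝔥×𝔥)) equals (clos(graph Γ₀) ∩ (N̂_λ(A*) × 𝓗))⁻¹, where clos(graph Γ₀) is the closure in (𝔥×𝔥) × 𝓗 of the graph of Γ₀. In particular: ker(clos γ̂(λ)) = mul(clos(graph Γ₀)); mul(clos γ̂(λ)) = ker(clos(graph Γ₀)) ∩ N̂_λ(A*); ran(clos γ̂(λ)) = dom(clos(graph Γ₀)) ∩ N̂_λ(A*);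 and dom(clos γ̂(λ)) = {h ∈ 𝓗 : (f̂,h) ∈ clos(graph Γ₀) for some f̂ ∈ N̂_λ(A*)}. -/
noncomputable section

open Filter Topology

namespace BT

local notation "⟪" x ", " y "⟫" => @inner ℂ _ _ x y

variable {E F : Type*} [NormedAddCommGroup E] [InnerProductSpace ℂ E] [CompleteSpace E]
  [NormedAddCommGroup F] [InnerProductSpace ℂ F] [CompleteSpace F]

/-- The relation `γ̂(l) = {(Γ₀ f̂, f̂) : f̂ ∈ N̂_l(dom Γ)}`. -/
def hatGamma (Γ : Set ((E × E) × (F × F))) (l : ℂ) : Set (F × (E × E)) :=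
  {q | q.2 ∈ hatN (domR Γ) l ∧ (q.2, q.1) ∈ G0 Γ}


section Statement13Aux

variable {G G' : Type*} [NormedAddCommGroup G] [InnerProductSpace ℂ G]
  [NormedAddCommGroup G'] [InnerProductSpace ℂ G']

lemma adjR_isClosed (S : Set (G' × G)) : IsClosed (adjR S) := by
  have h : adjR S = ⋂ q ∈ S, {p : G × G' | ⟪p.1, q.2⟫ = ⟪p.2, q.1⟫} := by
    ext p; simp [adjR]
  rw [h]
  exact isClosed_biInter fun q _ => isClosed_eq
    (continuous_fst.inner continuous_const) (continuous_snd.inner continuous_const)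

lemma adjR_zero (S : Set (G' × G)) : (0 : G × G') ∈ adjR S := by
  intro q hq; simp

lemma adjR_add {S : Set (G' × G)} {p q : G × G'} (hp : p ∈ adjR S) (hq : q ∈ adjR S) :
    p + q ∈ adjR S := by
  intro r hr
  have h1 := hp r hr; have h2 := hq r hr
  simp only [Prod.fst_add, Prod.snd_add, inner_add_left]
  rw [h1, h2]

lemma adjR_sub {S : Set (G' × G)} {p q : G × G'} (hp : p ∈ adjR S) (hq : q ∈ adjR S) :
    p - q ∈ adjR S := by
  intro r hr
  have h1 := hp r hr; have h2 := hq r hr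
  simp only [Prod.fst_sub, Prod.snd_sub, inner_sub_left]
  rw [h1, h2]

lemma adjR_smul {S : Set (G' × G)} {p : G × G'} (c : ℂ) (hp : p ∈ adjR S) :
    c • p ∈ adjR S := by
  intro r hr
  have h1 := hp r hr
  simp only [Prod.smul_fst, Prod.smul_snd, inner_smul_left]
  rw [h1]

lemma sym_lower {S : Set (G × G)} (hS : S ⊆ adjR S) {x y : G} (hxy : (x, y) ∈ S) (μ : ℂ) :
    |μ.im| * ‖x‖ ≤ ‖y - μ • x‖ := by
  have hsym : (⟪x, y⟫ : ℂ) = ⟪y, x⟫ := hS hxy (x, y) hxy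
  have hconj : (starRingEnd ℂ) (⟪x, y⟫ : ℂ) = ⟪x, y⟫ := by
    rw [inner_conj_symm]; exact hsym.symm
  have him : (⟪x, y⟫ : ℂ).im = 0 := (Complex.conj_eq_iff_im.mp hconj)
  have h1 : (⟪x, y - μ • x⟫ : ℂ).im = -(μ.im * ‖x‖ ^ 2) := by
    have h3 : (⟪x, x⟫ : ℂ).im = 0 := by
      have := inner_self_im (𝕜 := ℂ) x
      rwa [RCLike.im_to_complex] at this
    have h4 : (⟪x, x⟫ : ℂ).re = ‖x‖ ^ 2 := by
      have := inner_self_eq_norm_sq (𝕜 := ℂ) x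
      rwa [RCLike.re_to_complex] at this
    rw [inner_sub_right, inner_smul_right]
    simp only [Complex.sub_im, Complex.mul_im, him, h3, h4]
    ring
  have h2 : |(⟪x, y - μ • x⟫ : ℂ).im| ≤ ‖x‖ * ‖y - μ • x‖ :=
    le_trans (Complex.abs_im_le_norm _) (le_trans (le_of_eq rfl)
      (norm_inner_le_norm x _))
  rw [h1, abs_neg, abs_mul, abs_of_nonneg (by positivity : (0:ℝ) ≤ ‖x‖^2)] at h2
  rcases eq_or_lt_of_le (norm_nonneg x) with h0 | h0
  · rw [← h0]; simp [norm_nonneg]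
  · nlinarith [norm_nonneg (y - μ • x)]

lemma surjAux (S : Set (G × G)) [CompleteSpace G] (hsa : adjR S = S) {l : ℂ}
    (hl : l.im ≠ 0) (v : G) : ∃ x y : G, (x, y) ∈ S ∧ y - l • x = v := by
  have hSsub : S ⊆ adjR S := le_of_eq hsa.symm
  have hSc : IsClosed S := hsa ▸ adjR_isClosed S
  set c : ℝ := |l.im| with hcdef
  have hc0 : (0:ℝ) < c := abs_pos.mpr hl
  let R : Submodule ℂ G :=
    { carrier := {w | ∃ x y : G, (x, y) ∈ S ∧ y - l • x = w}
      zero_mem' := ⟨0, 0, by rw [← hsa]; exact adjR_zero S, by simp⟩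
      add_mem' := by
        rintro a b ⟨x, y, hxy, rfl⟩ ⟨x', y', hxy', rfl⟩
        refine ⟨x + x', y + y', ?_, ?_⟩
        · rw [← hsa] at hxy hxy' ⊢
          exact adjR_add hxy hxy'
        · rw [smul_add]; abel
      smul_mem' := by
        rintro m a ⟨x, y, hxy, rfl⟩
        refine ⟨m • x, m • y, ?_, ?_⟩
        · rw [← hsa] at hxy ⊢
          exact adjR_smul m hxy
        · rw [smul_sub, smul_comm] }
  have hRclosed : IsClosed (R : Set G) := by
    refine IsSeqClosed.isClosed ?_
    intro f w hf hfw
    choose xs ys hSm heq using hf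
    have hdiff : ∀ m n : ℕ, (xs m - xs n, ys m - ys n) ∈ S := by
      intro m n
      rw [← hsa] at hSm ⊢
      exact adjR_sub (hSm m) (hSm n)
    have hbound : ∀ m n : ℕ, c * ‖xs m - xs n‖ ≤ ‖f m - f n‖ := by
      intro m n
      have h1 := sym_lower hSsub (hdiff m n) l
      have h2 : ys m - ys n - l • (xs m - xs n) = f m - f n := by
        rw [← heq m, ← heq n, smul_sub]; abel
      rw [h2] at h1; exact h1
    have hcx : CauchySeq xs := by
      rw [Metric.cauchySeq_iff]
      intro ε hε
      obtain ⟨N, hN⟩ := (Metric.cauchySeq_iff.mp hfw.cauchySeq) (c * ε) (by positivity)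
      refine ⟨N, fun m hm n hn => ?_⟩
      have h4 := hbound m n
      have h3 := hN m hm n hn
      rw [dist_eq_norm] at h3 ⊢
      nlinarith
    obtain ⟨x, hx⟩ := cauchySeq_tendsto_of_complete hcx
    have hysf : ∀ n, ys n = f n + l • xs n := by
      intro n; rw [← heq n]; abel
    have hy : Tendsto ys atTop (nhds (w + l • x)) :=
      (hfw.add (hx.const_smul l)).congr fun n => (hysf n).symm
    have hmem : (x, w + l • x) ∈ S :=
      hSc.isSeqClosed (fun n => hSm n) (hx.prodMk_nhds hy)
    exact ⟨x, w + l • x, hmem, by abel⟩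
  have hbot : Rᗮ = ⊥ := by
    rw [Submodule.eq_bot_iff]
    intro w hw
    have hmem : (w, (starRingEnd ℂ) l • w) ∈ S := by
      rw [← hsa]
      rintro ⟨x, y⟩ hxy
      have h0 : (⟪y - l • x, w⟫ : ℂ) = 0 :=
        (Submodule.mem_orthogonal R w).mp hw (y - l • x) ⟨x, y, hxy, rfl⟩
      rw [inner_sub_left, inner_smul_left, sub_eq_zero] at h0
      have h1 : (⟪w, y⟫ : ℂ) = l * ⟪w, x⟫ := by
        have := congrArg (starRingEnd ℂ) h0
        simpa [map_mul] using this
      rw [inner_smul_left, h1]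
      simp
    have h2 := sym_lower hSsub hmem ((starRingEnd ℂ) l)
    simp only [sub_self, norm_zero] at h2
    have h3 : |((starRingEnd ℂ) l).im| = c := by simp [hcdef]
    rw [h3] at h2
    have h4 : ‖w‖ ≤ 0 := by nlinarith [norm_nonneg w]
    exact norm_le_zero_iff.mp h4
  haveI : CompleteSpace R := hRclosed.completeSpace_coe
  have htop : R = ⊤ := Submodule.orthogonal_eq_bot_iff.mp hbot
  have hv : v ∈ R := htop ▸ Submodule.mem_top
  exact hv

end Statement13Aux

/-- The main transform of the boundary relation, a relation in `WithLp 2 (E × F)`. -/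
def mT (Γ : Set ((E × E) × (F × F))) : Set (WithLp 2 (E × F) × WithLp 2 (E × F)) :=
  {p | ((p.1.fst, p.2.fst), (p.1.snd, -p.2.snd)) ∈ Γ}

lemma gamma_sub {Γ : Set ((E × E) × (F × F))} (hΓ : invR Γ = kreinAdj Γ)
    {p q : (E × E) × (F × F)} (hp : p ∈ Γ) (hq : q ∈ Γ) : p - q ∈ Γ := by
  have hp' : (p.2, p.1) ∈ kreinAdj Γ := by rw [← hΓ]; exact hp
  have hq' : (q.2, q.1) ∈ kreinAdj Γ := by rw [← hΓ]; exact hq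
  have hpq : ((p - q).2, (p - q).1) ∈ kreinAdj Γ := by
    intro r hr
    have h1 := hp' r hr
    have h2 := hq' r hr
    simp only [kIP, Prod.fst_sub, Prod.snd_sub, inner_sub_left] at h1 h2 ⊢
    linear_combination h1 - h2
  rw [← hΓ] at hpq
  exact hpq

lemma mT_adj {Γ : Set ((E × E) × (F × F))} (hΓ : invR Γ = kreinAdj Γ) :
    adjR (mT Γ) = mT Γ := by
  have key : ∀ q : WithLp 2 (E × F) × WithLp 2 (E × F), ∀ r ∈ Γ,
      ((⟪q.1, (WithLp.equiv 2 (E × F)).symm (r.1.2, -r.2.2)⟫ : ℂ) =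
        ⟪q.2, (WithLp.equiv 2 (E × F)).symm (r.1.1, r.2.1)⟫) ↔
      (kIP r.1 (q.1.fst, q.2.fst) = kIP r.2 (q.1.snd, -q.2.snd)) := by
    intro q r hr
    simp only [WithLp.prod_inner_apply, WithLp.equiv_symm_apply, WithLp.toLp_fst, WithLp.ofLp_fst, WithLp.ofLp_toLp, WithLp.toLp_snd, WithLp.ofLp_snd,
      inner_neg_right, inner_neg_left, kIP]
    constructor
    · intro h
      linear_combination (-Complex.I) * h
    · intro h
      linear_combination Complex.I * h +
        ((⟪q.1.fst, r.1.2⟫ : ℂ) - ⟪q.1.snd, r.2.2⟫ - ⟪q.2.fst, r.1.1⟫ - ⟪q.2.snd, r.2.1⟫) *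
          Complex.I_sq
  ext q
  constructor
  · intro hq
    show ((q.1.fst, q.2.fst), (q.1.snd, -q.2.snd)) ∈ Γ
    have hk : ((q.1.snd, -q.2.snd), (q.1.fst, q.2.fst)) ∈ kreinAdj Γ := by
      intro r hr
      have hpmem : ((WithLp.equiv 2 (E × F)).symm (r.1.1, r.2.1),
          (WithLp.equiv 2 (E × F)).symm (r.1.2, -r.2.2)) ∈ mT Γ := by
        show ((((WithLp.equiv 2 (E × F)).symm (r.1.1, r.2.1)).fst, _), _) ∈ Γ
        simp only [WithLp.equiv_symm_apply, WithLp.toLp_fst, WithLp.ofLp_fst, WithLp.ofLp_toLp, WithLp.toLp_snd, WithLp.ofLp_snd, neg_neg]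
        exact hr
      exact (key q r hr).mp (hq _ hpmem)
    rw [← hΓ] at hk
    exact hk
  · intro hq p hp
    have hk : ((q.1.snd, -q.2.snd), (q.1.fst, q.2.fst)) ∈ kreinAdj Γ := by
      rw [← hΓ]; exact hq
    have hrΓ : ((p.1.fst, p.2.fst), (p.1.snd, -p.2.snd)) ∈ Γ := hp
    have h2 := (key q ((p.1.fst, p.2.fst), (p.1.snd, -p.2.snd)) hrΓ).mpr (hk _ hrΓ)
    simpa using h2

/-- the closure of the γ-field relation of a unitary boundary triple
equals the inverse of the restriction of the closure of `Γ₀` to `N̂_λ(A*)`. -/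
theorem statement13 (A : Set (E × E)) (Γ : Set ((E × E) × (F × F)))
    (hA : IsClosedSymRel A) (hU : IsUnitaryBT A Γ) :
    ∀ l : ℂ, l.im ≠ 0 →
      closure (hatGamma Γ l) = invR {q ∈ closure (G0 Γ) | q.1 ∈ hatN (adjR A) l} ∧
      kerR (closure (hatGamma Γ l)) = mulR (closure (G0 Γ)) ∧
      mulR (closure (hatGamma Γ l)) = kerR (closure (G0 Γ)) ∩ hatN (adjR A) l ∧
      ranR (closure (hatGamma Γ l)) = domR (closure (G0 Γ)) ∩ hatN (adjR A) l ∧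
      domR (closure (hatGamma Γ l)) =
        {h : F | ∃ p ∈ hatN (adjR A) l, (p, h) ∈ closure (G0 Γ)} := by
  intro l hl
  obtain ⟨⟨hGreen, hdomA, hdd, hΓu⟩, hmulΓ⟩ := hU
  set S' : Set ((E × E) × F) := {q ∈ closure (G0 Γ) | q.1 ∈ hatN (adjR A) l} with hS'def
  have hmain : closure (hatGamma Γ l) = invR S' := by
    apply Set.Subset.antisymm
    · apply closure_minimal
      · rintro ⟨h, f⟩ ⟨hfN, hfG⟩
        exact ⟨subset_closure hfG, ⟨hdomA hfN.1, hfN.2⟩⟩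
      · have h1 : IsClosed (adjR A) := adjR_isClosed A
        have h2 : IsClosed S' := by
          have hrw : S' = closure (G0 Γ) ∩
              ((fun q : (E × E) × F => q.1) ⁻¹' (adjR A) ∩
                {q : (E × E) × F | q.1.2 = l • q.1.1}) := rfl
          rw [hrw]
          exact isClosed_closure.inter ((h1.preimage continuous_fst).inter
            (isClosed_eq continuous_fst.snd (continuous_fst.fst.const_smul l)))
        have h3 : invR S' = Prod.swap ⁻¹' S' := rfl
        rw [h3]
        exact h2.preimage continuous_swap
    · rintro ⟨h, f⟩ ⟨hclos, hfA, hfl⟩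
      obtain ⟨u, hu, huconv⟩ := mem_closure_iff_seq_limit.mp hclos
      choose hb hhb using hu
      have hsa : adjR (mT Γ) = mT Γ := mT_adj hΓu
      -- limit components of u
      have hu1 : Tendsto (fun n => (u n).1) atTop (nhds f) :=
        (continuous_fst.tendsto _).comp huconv
      have hu11 : Tendsto (fun n => (u n).1.1) atTop (nhds f.1) :=
        (continuous_fst.tendsto _).comp hu1
      have hu12 : Tendsto (fun n => (u n).1.2) atTop (nhds f.2) :=
        (continuous_snd.tendsto _).comp hu1
      have hu2 : Tendsto (fun n => (u n).2) atTop (nhds h) :=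
        (continuous_snd.tendsto _).comp huconv
      -- the defect sequence
      set vs : ℕ → WithLp 2 (E × F) :=
        fun n => (WithLp.equiv 2 (E × F)).symm ((u n).1.2 - l • (u n).1.1, (0 : F)) with hvsdef
      have hw0 : Tendsto (fun n => ((u n).1.2 - l • (u n).1.1, (0 : F)))
          atTop (nhds ((0 : E), (0 : F))) := by
        have ht : Tendsto (fun n => (u n).1.2 - l • (u n).1.1) atTop
            (nhds (f.2 - l • f.1)) := hu12.sub (hu11.const_smul l)
        have h0 : f.2 - l • f.1 = 0 := by rw [hfl]; simp
        rw [h0] at ht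
        exact ht.prodMk_nhds tendsto_const_nhds
      have hv0 : Tendsto vs atTop (nhds 0) := by
        have hc : Continuous ((WithLp.equiv 2 (E × F)).symm : E × F → WithLp 2 (E × F)) :=
          WithLp.prod_continuous_toLp 2 E F
        exact (hc.tendsto ((0 : E), (0 : F))).comp hw0
      -- solve with the main transform
      have hsol : ∀ n, ∃ x y : WithLp 2 (E × F), (x, y) ∈ mT Γ ∧ y - l • x = vs n :=
        fun n => surjAux (mT Γ) hsa hl (vs n)
      choose xs ys hmem heq using hsol
      have hxb : ∀ n, |l.im| * ‖xs n‖ ≤ ‖vs n‖ := by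
        intro n
        have := sym_lower (hsa.superset) (hmem n) l
        rwa [heq n] at this
      have hlim0 : (0 : ℝ) < |l.im| := abs_pos.mpr hl
      have hxs0 : Tendsto xs atTop (nhds (0 : WithLp 2 (E × F))) := by
        have hvn : Tendsto (fun n => ‖vs n‖) atTop (nhds 0) := by
          have := hv0.norm
          rwa [norm_zero] at this
        have hg : Tendsto (fun n => |l.im|⁻¹ * ‖vs n‖) atTop (nhds 0) := by
          simpa using hvn.const_mul |l.im|⁻¹
        refine squeeze_zero_norm (fun n => ?_) hg
        have h5 := hxb n
        rw [inv_mul_eq_div, le_div_iff₀ hlim0, mul_comm]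
        exact h5
      have hcont1 : Continuous (fun x : WithLp 2 (E × F) => x.fst) :=
        continuous_fst.comp (WithLp.prod_continuous_ofLp 2 E F)
      have hcont2 : Continuous (fun x : WithLp 2 (E × F) => x.snd) :=
        continuous_snd.comp (WithLp.prod_continuous_ofLp 2 E F)
      have hxs1 : Tendsto (fun n => (xs n).fst) atTop (nhds (0 : E)) :=
        (hcont1.tendsto 0).comp hxs0
      have hxs2 : Tendsto (fun n => (xs n).snd) atTop (nhds (0 : F)) :=
        (hcont2.tendsto 0).comp hxs0
      -- component identities for ys
      have hyfst : ∀ n, (ys n).fst = ((u n).1.2 - l • (u n).1.1) + l • (xs n).fst := by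
        intro n
        have h1 := congrArg (fun z : WithLp 2 (E × F) => z.fst) (heq n)
        simp only [WithLp.sub_fst, WithLp.smul_fst, hvsdef, WithLp.equiv_symm_apply, WithLp.toLp_fst, WithLp.ofLp_fst, WithLp.ofLp_toLp] at h1
        exact sub_eq_iff_eq_add.mp h1
      have hysnd : ∀ n, (ys n).snd = l • (xs n).snd := by
        intro n
        have h1 := congrArg (fun z : WithLp 2 (E × F) => z.snd) (heq n)
        simp only [WithLp.sub_snd, WithLp.smul_snd, hvsdef, WithLp.toLp_snd, WithLp.ofLp_snd] at h1
        exact sub_eq_zero.mp h1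
      -- the approximating sequence in N̂_l(dom Γ)
      set φ : ℕ → E := fun n => (u n).1.1 - (xs n).fst with hφdef
      set κ : ℕ → F := fun n => (u n).2 - (xs n).snd with hκdef
      have hkey : ∀ n, ((φ n, l • φ n), (κ n, hb n + (ys n).snd)) ∈ Γ := by
        intro n
        have hd := gamma_sub hΓu (hhb n)
          (show (((xs n).fst, (ys n).fst), ((xs n).snd, -(ys n).snd)) ∈ Γ from hmem n)
        have hrw : ((u n).1, ((u n).2, hb n)) -
            (((xs n).fst, (ys n).fst), ((xs n).snd, -(ys n).snd)) =
            ((φ n, l • φ n), (κ n, hb n + (ys n).snd)) := by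
          have e1 : (u n).1.2 - (ys n).fst = l • φ n := by
            rw [hyfst n, hφdef]
            simp only [smul_sub]
            abel
          ext <;> simp [hφdef, hκdef, Prod.sub_def, e1]
        rwa [hrw] at hd
      have hseqmem : ∀ n, ((κ n, (φ n, l • φ n)) : F × (E × E)) ∈ hatGamma Γ l := by
        intro n
        exact ⟨⟨⟨(κ n, hb n + (ys n).snd), hkey n⟩, rfl⟩, ⟨hb n + (ys n).snd, hkey n⟩⟩
      have hφc : Tendsto φ atTop (nhds f.1) := by
        simpa using hu11.sub hxs1
      have hκc : Tendsto κ atTop (nhds h) := by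
        simpa using hu2.sub hxs2
      have hfeta : ((f.1, l • f.1) : E × E) = f := by
        rw [← hfl]
      refine mem_closure_iff_seq_limit.mpr ⟨fun n => (κ n, (φ n, l • φ n)), hseqmem, ?_⟩
      rw [show ((h, f) : F × (E × E)) = (h, (f.1, l • f.1)) by rw [hfeta]]
      exact hκc.prodMk_nhds (hφc.prodMk_nhds (hφc.const_smul l))
  have h0hat : (0 : E × E) ∈ hatN (adjR A) l := by
    refine ⟨fun q hq => by simp, by simp⟩
  refine ⟨hmain, ?_, ?_, ?_, ?_⟩
  · rw [hmain]
    exact Set.ext fun x => ⟨fun hx => hx.1, fun hx => ⟨hx, h0hat⟩⟩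
  · rw [hmain]
    exact Set.ext fun p => ⟨fun hp => ⟨hp.1, hp.2⟩, fun hp => ⟨hp.1, hp.2⟩⟩
  · rw [hmain]
    exact Set.ext fun p =>
      ⟨fun ⟨h, h1, h2⟩ => ⟨⟨h, h1⟩, h2⟩, fun ⟨⟨h, h1⟩, h2⟩ => ⟨h, h1, h2⟩⟩
  · rw [hmain]
    exact Set.ext fun h =>
      ⟨fun ⟨p, h1, h2⟩ => ⟨p, h2, h1⟩, fun ⟨p, h2, h1⟩ => ⟨p, h1, h2⟩⟩


end BT
end
end

section
/- Let Π = {𝓗,Γ₀,Γ₁} be a unitary boundary triple for A* with T = dom Γ, Weyl function M, γ-field γ and A₀ = ker Γ₀. Then the following are equivalent: (i) A₀ is essentially selfadjoint (equivalently, ran(A₀−λ) is dense in 𝔥 for some, equivalently every, λ ∈ ℂ₊ and for some, equivalently every, λ ∈ ℂ₋); (ii) γ(i) and γ(−i) are closable operators; (iii) γ(λ) is closable for every λ ∈ ℂ∖ℝ and dom(clos γ(λ)) = dom(clos γ(i)) for all λ ∈ ℂ₊ and dom(clos γ(λ)) = dom(clos γ(−i)) for all λ ∈ ℂ₋; (iv)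 the forms t_{M(i)} and t_{M(−i)} are closable; (v) t_{M(λ)} is closable for every λ ∈ ℂ∖ℝ, with dom(clos t_{M(λ)}) = dom(clos t_{M(i)}) for λ ∈ ℂ₊ and dom(clos t_{M(λ)}) = dom(clos t_{M(−i)}) for λ ∈ ℂ₋. Moreover, if these conditions hold, then dom(clos t_{M(λ)}) = dom(clos γ(λ)) = ran(clos(graph Γ₀)) for every λ ∈ ℂ∖ℝ, where clos(graph Γ₀) is the closure of the graph of Γ₀ in (𝔥×𝔥)×𝓗. -/
noncomputable section

open Filter Topology

namespace BT

local notation "⟪" x ", " y "⟫" => @inner ℂ _ _ x y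

set_option linter.unusedVariables false
set_option linter.unusedSectionVars false

section Aux

def LinSet {M : Type*} [AddCommGroup M] [Module ℂ M] (s : Set M) : Prop :=
  (0 : M) ∈ s ∧ (∀ p ∈ s, ∀ q ∈ s, p + q ∈ s) ∧ ∀ (c : ℂ), ∀ p ∈ s, c • p ∈ s

def mkSub {M : Type*} [AddCommGroup M] [Module ℂ M] (s : Set M) (hs : LinSet s) :
    Submodule ℂ M where
  carrier := s
  add_mem' := fun ha hb => hs.2.1 _ ha _ hb
  zero_mem' := hs.1
  smul_mem' := fun c p hp => hs.2.2 c p hp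

lemma LinSet.sub {M : Type*} [AddCommGroup M] [Module ℂ M] {s : Set M} (hs : LinSet s)
    {p q : M} (hp : p ∈ s) (hq : q ∈ s) : p - q ∈ s := by
  have := hs.2.1 p hp _ (hs.2.2 (-1) q hq)
  simpa [sub_eq_add_neg] using this

lemma LinSet.closure {M : Type*} [NormedAddCommGroup M] [NormedSpace ℂ M] {s : Set M}
    (hs : LinSet s) : LinSet (_root_.closure s) := by
  have h : _root_.closure (((mkSub s hs) : Submodule ℂ M) : Set M) = ((mkSub s hs).topologicalClosure : Set M) :=
    (Submodule.topologicalClosure_coe _).symm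
  have h2 : LinSet (((mkSub s hs).topologicalClosure : Submodule ℂ M) : Set M) :=
    ⟨Submodule.zero_mem _, fun p hp q hq => Submodule.add_mem _ hp hq,
      fun c p hp => Submodule.smul_mem _ c hp⟩
  rw [← h] at h2
  exact h2

lemma LinSet.preimage {X Y : Type*} [AddCommGroup X] [Module ℂ X] [AddCommGroup Y]
    [Module ℂ Y] (e : X →ₗ[ℂ] Y) {s : Set Y} (hs : LinSet s) : LinSet (e ⁻¹' s) := by
  refine ⟨?_, ?_, ?_⟩
  · show e 0 ∈ s
    rw [map_zero]; exact hs.1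
  · intro p hp q hq
    show e (p + q) ∈ s
    rw [map_add]; exact hs.2.1 _ hp _ hq
  · intro c p hp
    show e (c • p) ∈ s
    rw [map_smul]; exact hs.2.2 c _ hp

variable {G : Type*} [NormedAddCommGroup G] [InnerProductSpace ℂ G]

lemma mem_closure_of_orth [CompleteSpace G] {s : Set G} (hs : LinSet s) {x : G}
    (h : ∀ y : G, (∀ v ∈ s, ⟪y, v⟫ = 0) → ⟪y, x⟫ = 0) : x ∈ closure s := by
  have hx : x ∈ ((mkSub s hs)ᗮᗮ : Set G) := by
    rw [SetLike.mem_coe, Submodule.mem_orthogonal]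
    intro u hu
    exact h u fun v hv => inner_eq_zero_symm.mp ((Submodule.mem_orthogonal _ u).mp hu v hv)
  rwa [Submodule.orthogonal_orthogonal_eq_closure, Submodule.topologicalClosure_coe] at hx

lemma orth_zero_of_dense {s : Set G} (hd : Dense s) {w : G}
    (h : ∀ v ∈ s, ⟪w, v⟫ = 0) : w = 0 := by
  have hc : ∀ v ∈ closure s, ⟪w, v⟫ = 0 := by
    intro v hv
    have hsub : s ⊆ {v | ⟪w, v⟫ = (0 : ℂ)} := h
    have hcl : IsClosed {v : G | ⟪w, v⟫ = (0 : ℂ)} :=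
      isClosed_eq (Continuous.inner continuous_const continuous_id) continuous_const
    exact closure_minimal hsub hcl hv
  have : ⟪w, w⟫ = 0 := hc w (by rw [dense_iff_closure_eq.mp hd]; trivial)
  simpa using inner_self_eq_zero.mp this

lemma dense_of_orth [CompleteSpace G] {s : Set G} (hs : LinSet s)
    (h : ∀ y : G, (∀ v ∈ s, ⟪y, v⟫ = 0) → y = 0) : Dense s := by
  rw [dense_iff_closure_eq]
  apply Set.eq_univ_of_forall
  intro x
  exact mem_closure_of_orth hs fun y hy => by rw [h y hy]; exact inner_zero_left x

lemma exists_orth_decomp [CompleteSpace G] {s : Set G} (hs : LinSet s) (x : G) :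
    ∃ y ∈ closure s, ∀ v ∈ closure s, ⟪x - y, v⟫ = 0 := by
  set K := (mkSub s hs).topologicalClosure with hK
  haveI : CompleteSpace K := (Submodule.isClosed_topologicalClosure _).completeSpace_coe
  have hKs : (K : Set G) = closure s := Submodule.topologicalClosure_coe _
  refine ⟨K.orthogonalProjectionOnto x, ?_, ?_⟩
  · rw [← hKs]; exact (K.orthogonalProjectionOnto x).2
  · intro v hv
    have hmem : x - (K.orthogonalProjectionOnto x : G) ∈ Kᗮ :=
      Submodule.sub_starProjection_mem_orthogonal (K := K) x
    have hvK : v ∈ K := by rw [← hKs] at hv; exact hv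
    exact inner_eq_zero_symm.mp ((Submodule.mem_orthogonal _ _).mp hmem v hvK)

end Aux

section AdjLemmas

variable {E F : Type*} [NormedAddCommGroup E] [InnerProductSpace ℂ E]
  [NormedAddCommGroup F] [InnerProductSpace ℂ F]

def adjRS (S : Set (F × E)) : Set (E × F) := {p | ∀ q ∈ S, ⟪p.1, q.2⟫ = ⟪p.2, q.1⟫}

lemma adjRS_linSet (S : Set (F × E)) : LinSet (adjRS S) := by
  refine ⟨fun q hq => by simp, fun p hp q hq r hr => ?_, fun c p hp q hq => ?_⟩
  · have := hp r hr; have := hq r hr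
    simp only [Prod.fst_add, Prod.snd_add, inner_add_left]
    rw [hp r hr, hq r hr]
  · simp only [Prod.smul_fst, Prod.smul_snd, inner_smul_left]
    rw [hp q hq]

lemma adjRS_isClosed (S : Set (F × E)) : IsClosed (adjRS S) := by
  have : adjRS S = ⋂ q ∈ S, {p : E × F | ⟪p.1, q.2⟫ = ⟪p.2, q.1⟫} := by
    ext p; simp [adjRS, Set.mem_iInter]
  rw [this]
  refine isClosed_biInter fun q hq => isClosed_eq ?_ ?_
  · exact Continuous.inner (continuous_fst) continuous_const
  · exact Continuous.inner (continuous_snd) continuous_const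

lemma adjRS_pair_closure {S : Set (F × E)} {p : E × F} {q : F × E}
    (hp : p ∈ adjRS S) (hq : q ∈ closure S) : ⟪p.1, q.2⟫ = ⟪p.2, q.1⟫ := by
  have hsub : S ⊆ {r : F × E | ⟪p.1, r.2⟫ = ⟪p.2, r.1⟫} := fun r hr => hp r hr
  have hcl : IsClosed {r : F × E | ⟪p.1, r.2⟫ = ⟪p.2, r.1⟫} :=
    isClosed_eq (Continuous.inner continuous_const continuous_snd)
      (Continuous.inner continuous_const continuous_fst)
  exact closure_minimal hsub hcl hq

end AdjLemmas

section SymLower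

variable {G : Type*} [NormedAddCommGroup G] [InnerProductSpace ℂ G]

lemma sym_lower_s16 {A : Set (G × G)} (hsym : ∀ p ∈ A, ⟪p.1, p.2⟫ = ⟪p.2, p.1⟫)
    (z : ℂ) {p : G × G} (hp : p ∈ A) : |z.im| * ‖p.1‖ ≤ ‖p.2 - z • p.1‖ := by
  set x := p.1; set y := p.2
  have hr : (⟪x, y⟫ : ℂ).im = 0 := by
    have h1 : (starRingEnd ℂ) ⟪x, y⟫ = ⟪y, x⟫ := inner_conj_symm y x
    have h2 : (starRingEnd ℂ) ⟪x, y⟫ = ⟪x, y⟫ := by rw [h1, ← hsym p hp]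
    have h3 := congrArg Complex.im h2
    rw [Complex.conj_im] at h3
    linarith
  have key : z.im ^ 2 * ‖x‖ ^ 2 ≤ ‖y - z • x‖ ^ 2 := by
    have e1 : ‖y - z • x‖ ^ 2 = ‖y‖ ^ 2 - 2 * Complex.re ⟪y, z • x⟫ + ‖z • x‖ ^ 2 := by
      exact norm_sub_sq (𝕜 := ℂ) y (z • x)
    have e2 : Complex.re ⟪y, z • x⟫ = z.re * Complex.re ⟪x, y⟫ := by
      have : (⟪y, z • x⟫ : ℂ) = z * ⟪y, x⟫ := inner_smul_right y x z
      have hyx : (⟪y, x⟫ : ℂ) = ⟪x, y⟫ := (hsym p hp).symm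
      rw [this, hyx]
      have : (z * ⟪x, y⟫).re = z.re * (⟪x,y⟫:ℂ).re - z.im * (⟪x,y⟫:ℂ).im := Complex.mul_re _ _
      rw [this, hr]; ring
    have e3 : ‖z • x‖ ^ 2 = (z.re ^ 2 + z.im ^ 2) * ‖x‖ ^ 2 := by
      rw [norm_smul]
      have : ‖z‖ ^ 2 = z.re ^ 2 + z.im ^ 2 := by
        rw [Complex.sq_norm, Complex.normSq_apply]; ring
      rw [mul_pow, this]
    have e4 : (0:ℝ) ≤ ‖y - (z.re : ℂ) • x‖ ^ 2 := sq_nonneg _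
    have e5 : ‖y - (z.re : ℂ) • x‖ ^ 2
        = ‖y‖ ^ 2 - 2 * z.re * Complex.re ⟪x, y⟫ + z.re ^ 2 * ‖x‖ ^ 2 := by
      have h1 : ‖y - (z.re:ℂ) • x‖ ^ 2
          = ‖y‖ ^ 2 - 2 * Complex.re ⟪y, (z.re:ℂ) • x⟫ + ‖(z.re:ℂ) • x‖ ^ 2 := by
        exact norm_sub_sq (𝕜 := ℂ) y ((z.re:ℂ) • x)
      have h2 : Complex.re ⟪y, (z.re:ℂ) • x⟫ = z.re * Complex.re ⟪x, y⟫ := by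
        have : (⟪y, (z.re:ℂ) • x⟫ : ℂ) = (z.re:ℂ) * ⟪y, x⟫ := inner_smul_right y x _
        rw [this, (hsym p hp).symm]
        simp [Complex.mul_re]
        exact Or.inl rfl
      have h3 : ‖(z.re:ℂ) • x‖ ^ 2 = z.re ^ 2 * ‖x‖ ^ 2 := by
        rw [norm_smul, mul_pow]; simp [Complex.norm_real, sq_abs]
      rw [h1, h2, h3]; ring
    nlinarith [e4, e5, e1, e2, e3]
  have h1 : (|z.im| * ‖x‖) ^ 2 ≤ ‖y - z • x‖ ^ 2 := by
    rw [mul_pow, sq_abs]; exact key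
  have h2 : 0 ≤ |z.im| * ‖x‖ := mul_nonneg (abs_nonneg _) (norm_nonneg _)
  nlinarith [norm_nonneg (y - z • x), h1, h2]

lemma cauchy_of_shift {T : Set (G × G)} (hsym : ∀ p ∈ T, ⟪p.1, p.2⟫ = ⟪p.2, p.1⟫)
    (hlin : LinSet T) {l : ℂ} (hl : l.im ≠ 0) {q : ℕ → G × G} (hq : ∀ m, q m ∈ T)
    {v : ℕ → G} (hv : ∀ m, (q m).2 - l • (q m).1 = v m) (hcv : CauchySeq v) :
    CauchySeq (fun m => (q m).1) := by
  have hzpos : (0:ℝ) < |l.im| := abs_pos.mpr hl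
  have hbound : ∀ n m : ℕ, dist ((q n).1) ((q m).1) ≤ dist (v n) (v m) / |l.im| := by
    intro n m
    have hmem : q n - q m ∈ T := hlin.sub (hq n) (hq m)
    have hlb := sym_lower_s16 hsym l hmem
    have he : (q n - q m).2 - l • (q n - q m).1 = v n - v m := by
      rw [← hv n, ← hv m]
      simp only [Prod.fst_sub, Prod.snd_sub, smul_sub]
      abel
    rw [he] at hlb
    rw [dist_eq_norm, dist_eq_norm, le_div_iff₀ hzpos, mul_comm]
    exact hlb
  rw [cauchySeq_iff_tendsto_dist_atTop_0]
  have hwd : Tendsto (fun nm : ℕ × ℕ => dist (v nm.1) (v nm.2)) atTop (nhds 0) :=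
    cauchySeq_iff_tendsto_dist_atTop_0.mp hcv
  have hgd : Tendsto (fun nm : ℕ × ℕ => dist (v nm.1) (v nm.2) / |l.im|) atTop (nhds 0) := by
    simpa using hwd.div_const |l.im|
  exact squeeze_zero (fun nm => dist_nonneg) (fun nm => hbound nm.1 nm.2) hgd

lemma cauchySeq_of_normsq {f : ℕ → G}
    (h : Tendsto (fun nm : ℕ × ℕ => ‖f nm.1 - f nm.2‖ ^ 2) atTop (nhds 0)) :
    CauchySeq f := by
  rw [cauchySeq_iff_tendsto_dist_atTop_0]
  have h2 := (Real.continuous_sqrt.tendsto 0).comp h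
  rw [Real.sqrt_zero] at h2
  refine h2.congr fun nm => ?_
  show Real.sqrt (‖f nm.1 - f nm.2‖ ^ 2) = _
  rw [Real.sqrt_sq (norm_nonneg _), dist_eq_norm]

lemma normsq_tendsto_of_cauchy {f : ℕ → G} (h : CauchySeq f) :
    Tendsto (fun nm : ℕ × ℕ => ‖f nm.1 - f nm.2‖ ^ 2) atTop (nhds 0) := by
  have hd := cauchySeq_iff_tendsto_dist_atTop_0.mp h
  have := ((continuous_pow 2).tendsto (0:ℝ)).comp hd
  simp only [Function.comp_def] at this
  refine (by simpa using this : Tendsto (fun nm : ℕ × ℕ => dist (f nm.1) (f nm.2) ^ 2) atTop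
    (nhds 0)).congr fun nm => ?_
  rw [dist_eq_norm]

end SymLower

section SelfAdj

variable {G : Type*} [NormedAddCommGroup G] [InnerProductSpace ℂ G]

def SArel (A : Set (G × G)) : Prop :=
  ∀ p : G × G, p ∈ A ↔ ∀ q ∈ A, ⟪p.1, q.2⟫ = ⟪p.2, q.1⟫

namespace SArel

variable {A : Set (G × G)} (h : SArel A)

lemma pair (h : SArel A) {p q : G × G} (hp : p ∈ A) (hq : q ∈ A) :
    ⟪p.1, q.2⟫ = ⟪p.2, q.1⟫ := (h p).mp hp q hq

lemma sym (h : SArel A) : ∀ p ∈ A, ⟪p.1, p.2⟫ = ⟪p.2, p.1⟫ :=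
  fun p hp => h.pair hp hp

lemma linSet (h : SArel A) : LinSet A := by
  refine ⟨(h 0).mpr fun q hq => by simp, fun p hp q hq => (h _).mpr fun r hr => ?_,
    fun c p hp => (h _).mpr fun r hr => ?_⟩
  · simp only [Prod.fst_add, Prod.snd_add, inner_add_left]
    rw [h.pair hp hr, h.pair hq hr]
  · simp only [Prod.smul_fst, Prod.smul_snd, inner_smul_left]
    rw [h.pair hp hr]

lemma isClosed (h : SArel A) : IsClosed A := by
  have hA : A = ⋂ q ∈ A, {p : G × G | ⟪p.1, q.2⟫ = ⟪p.2, q.1⟫} := by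
    ext p
    simp only [Set.mem_iInter, Set.mem_setOf_eq]
    exact h p
  rw [hA]
  refine isClosed_biInter fun q hq => isClosed_eq ?_ ?_
  · exact Continuous.inner continuous_fst continuous_const
  · exact Continuous.inner continuous_snd continuous_const

lemma ker0 (h : SArel A) {z : ℂ} (hz : z.im ≠ 0) {x : G} (hx : (x, z • x) ∈ A) :
    x = 0 := by
  have := sym_lower_s16 h.sym z hx
  simp only [sub_self, norm_zero] at this
  have h0 : |z.im| * ‖x‖ ≤ 0 := this
  have hzpos : (0:ℝ) < |z.im| := abs_pos.mpr hz
  have hx0 : ‖x‖ = 0 := by nlinarith [norm_nonneg x]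
  exact norm_eq_zero.mp hx0

lemma surj [CompleteSpace G] (h : SArel A) {z : ℂ} (hz : z.im ≠ 0) (y : G) :
    ∃ x, (x, y + z • x) ∈ A := by
  classical
  have hzpos : (0:ℝ) < |z.im| := abs_pos.mpr hz
  set r : Set G := {w | ∃ p ∈ A, p.2 - z • p.1 = w} with hr
  have hrlin : LinSet r := by
    refine ⟨⟨0, h.linSet.1, by simp⟩, ?_, ?_⟩
    · rintro _ ⟨p, hp, rfl⟩ _ ⟨q, hq, rfl⟩
      exact ⟨p + q, h.linSet.2.1 p hp q hq, by
        simp only [Prod.fst_add, Prod.snd_add, smul_add]; abel⟩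
    · rintro c _ ⟨p, hp, rfl⟩
      refine ⟨c • p, h.linSet.2.2 c p hp, ?_⟩
      simp only [Prod.smul_fst, Prod.smul_snd, smul_comm c z, smul_sub]
  have hrclosed : IsClosed r := by
    rw [← isSeqClosed_iff_isClosed]
    intro w w0 hw hlim
    choose p hp hpe using hw
    have hbound : ∀ n m : ℕ, dist ((p n).1) ((p m).1) ≤ dist (w n) (w m) / |z.im| := by
      intro n m
      have hmem : p n - p m ∈ A := h.linSet.sub (hp n) (hp m)
      have hl := sym_lower_s16 h.sym z hmem
      have he : (p n - p m).2 - z • (p n - p m).1 = w n - w m := by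
        rw [← hpe n, ← hpe m]
        simp only [Prod.fst_sub, Prod.snd_sub, smul_sub]
        abel
      rw [he] at hl
      rw [dist_eq_norm, dist_eq_norm, le_div_iff₀ hzpos, mul_comm]
      exact hl
    have hc1 : CauchySeq (fun n => (p n).1) := by
      rw [cauchySeq_iff_tendsto_dist_atTop_0]
      have hwd : Tendsto (fun nm : ℕ × ℕ => dist (w nm.1) (w nm.2)) atTop (nhds 0) :=
        cauchySeq_iff_tendsto_dist_atTop_0.mp hlim.cauchySeq
      have hgd : Tendsto (fun nm : ℕ × ℕ => dist (w nm.1) (w nm.2) / |z.im|) atTop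
          (nhds 0) := by
        simpa using hwd.div_const |z.im|
      exact squeeze_zero (fun nm => dist_nonneg) (fun nm => hbound nm.1 nm.2) hgd
    obtain ⟨x, hx⟩ := cauchySeq_tendsto_of_complete hc1
    have hsnd : ∀ n, (p n).2 = w n + z • (p n).1 := by
      intro n
      have := hpe n
      rw [← this]
      abel
    have h2 : Tendsto (fun n => (p n).2) atTop (nhds (w0 + z • x)) := by
      have := hlim.add ((hx.const_smul z) : Tendsto (fun n => z • (p n).1) atTop _)
      exact this.congr fun n => (hsnd n).symm
    have hpx : Tendsto p atTop (nhds (x, w0 + z • x)) := by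
      have := hx.prodMk_nhds h2
      exact this.congr fun n => rfl
    have hmem : (x, w0 + z • x) ∈ A := h.isClosed.mem_of_tendsto hpx
      (Filter.Eventually.of_forall hp)
    exact ⟨(x, w0 + z • x), hmem, by simp⟩
  have hdense : Dense r := by
    refine dense_of_orth hrlin ?_
    intro u hu
    have humem : (u, (starRingEnd ℂ) z • u) ∈ A := by
      refine (h _).mpr ?_
      intro q hq
      have h0 : ⟪u, q.2 - z • q.1⟫ = 0 := hu _ ⟨q, hq, rfl⟩
      rw [inner_sub_right, inner_smul_right, sub_eq_zero] at h0
      simp only [inner_smul_left, Complex.conj_conj]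
      exact h0
    have hz' : ((starRingEnd ℂ) z).im ≠ 0 := by
      simpa [Complex.conj_im] using hz
    exact h.ker0 hz' humem
  have hy : y ∈ r := by
    have hyc : y ∈ closure r := by rw [dense_iff_closure_eq.mp hdense]; trivial
    rwa [hrclosed.closure_eq] at hyc
  obtain ⟨p, hp, hpe⟩ := hy
  refine ⟨p.1, ?_⟩
  have hse : y + z • p.1 = p.2 := by rw [← hpe]; abel
  rw [hse]
  exact hp

lemma resolvent [CompleteSpace G] (h : SArel A) {z : ℂ} (hz : z.im ≠ 0) :
    ∃ ρ : G → G, (∀ y, (ρ y, y + z • ρ y) ∈ A) ∧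
      (∀ x y, (x, y + z • x) ∈ A → x = ρ y) ∧
      (∀ y y', ρ (y + y') = ρ y + ρ y') ∧ (∀ y, ρ (-y) = - ρ y) ∧ Continuous ρ := by
  classical
  choose ρ hρ using h.surj hz
  have huniq : ∀ x y, (x, y + z • x) ∈ A → x = ρ y := by
    intro x y hx
    have hd : (x - ρ y, z • (x - ρ y)) ∈ A := by
      have hsub := h.linSet.sub hx (hρ y)
      have he : ((x, y + z • x) - (ρ y, y + z • ρ y)) = (x - ρ y, z • (x - ρ y)) := by
        rw [Prod.mk_sub_mk]
        congr 1
        rw [smul_sub]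
        abel
      rwa [he] at hsub
    have := h.ker0 hz hd
    rw [sub_eq_zero] at this
    exact this
  have hadd : ∀ y y', ρ (y + y') = ρ y + ρ y' := by
    intro y y'
    refine (huniq (ρ y + ρ y') (y + y') ?_).symm
    have hsum := h.linSet.2.1 _ (hρ y) _ (hρ y')
    have he : ((ρ y, y + z • ρ y) + (ρ y', y' + z • ρ y')) =
        (ρ y + ρ y', (y + y') + z • (ρ y + ρ y')) := by
      rw [Prod.mk_add_mk]
      congr 1
      rw [smul_add]
      abel
    rwa [he] at hsum
  have hneg : ∀ y, ρ (-y) = - ρ y := by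
    intro y
    refine (huniq (- ρ y) (-y) ?_).symm
    have hsm := h.linSet.2.2 (-1) _ (hρ y)
    have he : ((-1 : ℂ) • ((ρ y, y + z • ρ y) : G × G)) =
        (- ρ y, -y + z • (- ρ y)) := by
      rw [Prod.smul_mk]
      congr 1
      · simp
      · simp only [neg_smul, one_smul, smul_neg]
        abel
    rwa [he] at hsm
  have hbound : ∀ y, ‖ρ y‖ ≤ |z.im|⁻¹ * ‖y‖ := by
    intro y
    have hl := sym_lower_s16 h.sym z (hρ y)
    have he : (y + z • ρ y) - z • ρ y = y := by abel
    rw [he] at hl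
    have hzpos : (0:ℝ) < |z.im| := abs_pos.mpr hz
    rw [inv_mul_eq_div, le_div_iff₀ hzpos, mul_comm]
    exact hl
  have hcont : Continuous ρ := by
    have hlip : LipschitzWith ⟨|z.im|⁻¹, inv_nonneg.mpr (abs_nonneg _)⟩ ρ := by
      refine LipschitzWith.of_dist_le_mul fun a b => ?_
      have hsub : ρ a - ρ b = ρ (a - b) := by
        rw [sub_eq_add_neg, sub_eq_add_neg, hadd, hneg]
      rw [dist_eq_norm, dist_eq_norm, hsub]
      exact hbound (a - b)
    exact hlip.continuous
  exact ⟨ρ, hρ, huniq, hadd, hneg, hcont⟩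

end SArel

end SelfAdj

section Plumb

variable {E F : Type*} [NormedAddCommGroup E] [InnerProductSpace ℂ E]
  [NormedAddCommGroup F] [InnerProductSpace ℂ F]

def e1 (x : WithLp 2 (E × F)) : E := (WithLp.equiv 2 (E × F) x).1
def e2 (x : WithLp 2 (E × F)) : F := (WithLp.equiv 2 (E × F) x).2
def mkK (a : E) (b : F) : WithLp 2 (E × F) := (WithLp.equiv 2 (E × F)).symm (a, b)

@[simp] lemma e1_mk (a : E) (b : F) : e1 (mkK a b) = a := rfl
@[simp] lemma e2_mk (a : E) (b : F) : e2 (mkK a b) = b := rfl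
@[simp] lemma e1_add (x y : WithLp 2 (E × F)) : e1 (x + y) = e1 x + e1 y := rfl
@[simp] lemma e2_add (x y : WithLp 2 (E × F)) : e2 (x + y) = e2 x + e2 y := rfl
@[simp] lemma e1_sub (x y : WithLp 2 (E × F)) : e1 (x - y) = e1 x - e1 y := rfl
@[simp] lemma e2_sub (x y : WithLp 2 (E × F)) : e2 (x - y) = e2 x - e2 y := rfl
@[simp] lemma e1_smul (c : ℂ) (x : WithLp 2 (E × F)) : e1 (c • x) = c • e1 x := rfl
@[simp] lemma e2_smul (c : ℂ) (x : WithLp 2 (E × F)) : e2 (c • x) = c • e2 x := rfl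
@[simp] lemma e1_neg (x : WithLp 2 (E × F)) : e1 (-x) = - e1 x := rfl
@[simp] lemma e2_neg (x : WithLp 2 (E × F)) : e2 (-x) = - e2 x := rfl
@[simp] lemma e1_zero : e1 (0 : WithLp 2 (E × F)) = 0 := rfl
@[simp] lemma e2_zero : e2 (0 : WithLp 2 (E × F)) = 0 := rfl
@[simp] lemma mk_eta (x : WithLp 2 (E × F)) : mkK (e1 x) (e2 x) = x := rfl

lemma mk_add (a a' : E) (b b' : F) : mkK (a + a') (b + b') = mkK a b + mkK a' b' := rfl

lemma innerK (x y : WithLp 2 (E × F)) : ⟪x, y⟫ = ⟪e1 x, e1 y⟫ + ⟪e2 x, e2 y⟫ := rfl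

lemma continuous_e1 : Continuous (e1 : WithLp 2 (E × F) → E) :=
  continuous_fst.comp (WithLp.prodContinuousLinearEquiv 2 ℂ E F).continuous

lemma continuous_e2 : Continuous (e2 : WithLp 2 (E × F) → F) :=
  continuous_snd.comp (WithLp.prodContinuousLinearEquiv 2 ℂ E F).continuous

lemma continuous_mkK : Continuous (fun p : E × F => mkK p.1 p.2) :=
  (WithLp.prodContinuousLinearEquiv 2 ℂ E F).symm.continuous

end Plumb

section Triple
set_option linter.unusedSectionVars false

variable {E F : Type*} [NormedAddCommGroup E] [InnerProductSpace ℂ E]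
  [NormedAddCommGroup F] [InnerProductSpace ℂ F]

lemma kIP_add_right (a b c : E × E) : kIP a (b + c) = kIP a b + kIP a c := by
  simp only [kIP, Prod.fst_add, Prod.snd_add, inner_add_left]
  ring

lemma kIP_smul_right (a : E × E) (c : ℂ) (b : E × E) :
    kIP a (c • b) = (starRingEnd ℂ) c * kIP a b := by
  simp only [kIP, Prod.smul_fst, Prod.smul_snd, inner_smul_left]
  ring

lemma kIP_zero_right (a : E × E) : kIP a (0 : E × E) = 0 := by
  simp [kIP]

lemma kIP_continuous_right (a : E × E) : Continuous fun b : E × E => kIP a b := by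
  unfold kIP
  exact (continuous_const.mul (Continuous.inner continuous_fst continuous_const)).add
    (continuous_const.mul (Continuous.inner continuous_snd continuous_const))

variable {Γ : Set ((E × E) × (F × F))}

lemma mem_Gamma_iff (hGU : invR Γ = kreinAdj Γ) (p : (E × E) × (F × F)) :
    p ∈ Γ ↔ ∀ q ∈ Γ, kIP q.1 p.1 = kIP q.2 p.2 := by
  constructor
  · intro hp q hq
    have h1 : (p.2, p.1) ∈ invR Γ := hp
    rw [hGU] at h1
    exact h1 q hq
  · intro h
    have h1 : (p.2, p.1) ∈ kreinAdj Γ := fun q hq => h q hq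
    rw [← hGU] at h1
    exact h1

lemma Gamma_linSet (hGU : invR Γ = kreinAdj Γ) : LinSet Γ := by
  refine ⟨?_, ?_, ?_⟩
  · rw [mem_Gamma_iff hGU]
    intro q hq
    have : (0 : (E × E) × (F × F)).1 = (0 : E × E) := rfl
    rw [this, show (0 : (E × E) × (F × F)).2 = (0 : F × F) from rfl,
      kIP_zero_right, kIP_zero_right]
  · intro p hp q hq
    rw [mem_Gamma_iff hGU]
    intro r hr
    rw [Prod.fst_add, Prod.snd_add, kIP_add_right, kIP_add_right,
      (mem_Gamma_iff hGU p).mp hp r hr, (mem_Gamma_iff hGU q).mp hq r hr]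
  · intro c p hp
    rw [mem_Gamma_iff hGU]
    intro r hr
    rw [Prod.smul_fst, Prod.smul_snd, kIP_smul_right, kIP_smul_right,
      (mem_Gamma_iff hGU p).mp hp r hr]

lemma Gamma_isClosed (hGU : invR Γ = kreinAdj Γ) : IsClosed Γ := by
  have hA : Γ = ⋂ q ∈ Γ, {p : (E × E) × (F × F) | kIP q.1 p.1 = kIP q.2 p.2} := by
    ext p
    simp only [Set.mem_iInter, Set.mem_setOf_eq]
    exact mem_Gamma_iff hGU p
  rw [hA]
  exact isClosed_biInter fun q hq => isClosed_eq
    ((kIP_continuous_right q.1).comp continuous_fst)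
    ((kIP_continuous_right q.2).comp continuous_snd)

def tA (Γ : Set ((E × E) × (F × F))) : Set (WithLp 2 (E × F) × WithLp 2 (E × F)) :=
  {x | ((e1 x.1, e1 x.2), (e2 x.2, e2 x.1)) ∈ Γ}

lemma kIP_translate (p q : WithLp 2 (E × F) × WithLp 2 (E × F)) :
    (kIP ((e1 q.1, e1 q.2) : E × E) ((e1 p.1, e1 p.2) : E × E)
      = kIP ((e2 q.2, e2 q.1) : F × F) ((e2 p.2, e2 p.1) : F × F))
    ↔ ⟪p.1, q.2⟫ = ⟪p.2, q.1⟫ := by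
  rw [innerK p.1 q.2, innerK p.2 q.1]
  simp only [kIP]
  constructor
  · intro h
    linear_combination Complex.I * h +
      (⟪e1 p.1, e1 q.2⟫ + ⟪e2 p.1, e2 q.2⟫ - ⟪e1 p.2, e1 q.1⟫ - ⟪e2 p.2, e2 q.1⟫) *
        Complex.I_sq
  · intro h
    linear_combination (-Complex.I) * h

lemma tA_sa (hGU : invR Γ = kreinAdj Γ) : SArel (tA Γ) := by
  intro p
  rw [show p ∈ tA Γ ↔ ((e1 p.1, e1 p.2), (e2 p.2, e2 p.1)) ∈ Γ from Iff.rfl,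
    mem_Gamma_iff hGU]
  constructor
  · intro h q hq
    exact (kIP_translate p q).mp (h _ hq)
  · intro h q' hq'
    have hq : ((mkK q'.1.1 q'.2.2, mkK q'.1.2 q'.2.1) :
        WithLp 2 (E × F) × WithLp 2 (E × F)) ∈ tA Γ := hq'
    exact (kIP_translate p (mkK q'.1.1 q'.2.2, mkK q'.1.2 q'.2.1)).mpr (h _ hq)

end Triple


variable {E F : Type*} [NormedAddCommGroup E] [InnerProductSpace ℂ E] [CompleteSpace E]
  [NormedAddCommGroup F] [InnerProductSpace ℂ F] [CompleteSpace F]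


section Core
set_option linter.unusedSectionVars false

variable {E F : Type*} [NormedAddCommGroup E] [InnerProductSpace ℂ E] [CompleteSpace E]
  [NormedAddCommGroup F] [InnerProductSpace ℂ F] [CompleteSpace F]
variable {Γ : Set ((E × E) × (F × F))}

lemma green_A0 (hGreen : GreenPair Γ) {l : ℂ} {g g' f : E} {h' u u' : F}
    (hg : ((g, g'), ((0 : F), h')) ∈ Γ) (hf : ((f, l • f), (u, u')) ∈ Γ) :
    ⟪g' - (starRingEnd ℂ) l • g, f⟫ = ⟪h', u⟫ := by
  have hG := hGreen _ hf _ hg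
  simp only [inner_smul_left, inner_smul_right, inner_sub_left, inner_zero_left,
    inner_zero_right, Complex.conj_conj] at hG ⊢
  linear_combination -hG

lemma weyl_normsq (hGreen : GreenPair Γ) {l : ℂ} (hl : l.im ≠ 0) {f : E} {u u' : F}
    (hf : ((f, l • f), (u, u')) ∈ Γ) : formVal l u u' = ‖f‖ ^ 2 := by
  have hG := hGreen _ hf _ hf
  have h1 : ⟪u, u'⟫ - ⟪u', u⟫ = (l - (starRingEnd ℂ) l) * ⟪f, f⟫ := by
    simp only [inner_smul_left, inner_smul_right] at hG
    linear_combination -hG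
  have hne : l - (starRingEnd ℂ) l ≠ 0 := by
    rw [Complex.sub_conj]
    intro hc
    rcases mul_eq_zero.mp hc with hc | hc
    · rw [Complex.ofReal_eq_zero] at hc
      norm_num at hc
      exact hl hc
    · exact Complex.I_ne_zero hc
  unfold formVal
  rw [h1, inv_mul_cancel_left₀ hne, inner_self_eq_norm_sq_to_K]
  simp [← Complex.ofReal_pow]

lemma mem_A0 (p : E × E) : p ∈ A0 Γ ↔ ∃ h' : F, (p, ((0 : F), h')) ∈ Γ := Iff.rfl

lemma A0_linSet (hGU : invR Γ = kreinAdj Γ) : LinSet (A0 Γ) := by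
  obtain ⟨hz, hadd, hsmul⟩ := Gamma_linSet hGU
  refine ⟨⟨0, hz⟩, ?_, ?_⟩
  · rintro p ⟨h', hp⟩ q ⟨k', hq⟩
    refine ⟨h' + k', ?_⟩
    have := hadd _ hp _ hq
    simpa [Prod.mk_add_mk] using this
  · rintro c p ⟨h', hp⟩
    refine ⟨c • h', ?_⟩
    have := hsmul c _ hp
    simpa [Prod.smul_mk] using this

lemma A0_sym (hGreen : GreenPair Γ) : ∀ p ∈ A0 Γ, ∀ q ∈ A0 Γ, ⟪p.1, q.2⟫ = ⟪p.2, q.1⟫ := by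
  rintro p ⟨h', hp⟩ q ⟨k', hq⟩
  have hG := hGreen _ hq _ hp
  simp only [inner_zero_left, inner_zero_right] at hG
  linear_combination hG

lemma A0_sym' (hGreen : GreenPair Γ) : ∀ p ∈ A0 Γ, ⟪p.1, p.2⟫ = ⟪p.2, p.1⟫ :=
  fun p hp => A0_sym hGreen p hp p hp

lemma mem_ranShift {T : Set (E × E)} {l : ℂ} {v : E} :
    v ∈ ranR (shiftSub T l) ↔ ∃ q ∈ T, q.2 - l • q.1 = v := by
  constructor
  · rintro ⟨x, q, hq, heq⟩
    exact ⟨q, hq, by rw [Prod.ext_iff] at heq; exact heq.2.symm⟩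
  · rintro ⟨q, hq, heq⟩
    exact ⟨q.1, q, hq, by rw [heq]⟩

lemma adj_shift_orth {l : ℂ} {w : E} :
    (w, l • w) ∈ adjR (A0 Γ) ↔
      ∀ v ∈ ranR (shiftSub (A0 Γ) ((starRingEnd ℂ) l)), ⟪w, v⟫ = 0 := by
  constructor
  · intro h v hv
    rw [mem_ranShift] at hv
    obtain ⟨q, hq, rfl⟩ := hv
    have := h q hq
    simp only [inner_sub_right, inner_smul_right, inner_smul_left] at this ⊢
    linear_combination this
  · intro h q hq
    have := h _ (mem_ranShift.mpr ⟨q, hq, rfl⟩)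
    simp only [inner_sub_right, inner_smul_right, inner_smul_left] at this ⊢
    linear_combination this

lemma gfield_linSet (hGU : invR Γ = kreinAdj Γ) (l : ℂ) : LinSet (gfield Γ l) := by
  obtain ⟨hz, hadd, hsmul⟩ := Gamma_linSet hGU
  refine ⟨⟨0, by simp; exact hz⟩, ?_, ?_⟩
  · rintro p ⟨h', hp⟩ q ⟨k', hq⟩
    refine ⟨h' + k', ?_⟩
    have := hadd _ hp _ hq
    simpa [Prod.mk_add_mk, smul_add] using this
  · rintro c p ⟨h', hp⟩
    refine ⟨c • h', ?_⟩
    have := hsmul c _ hp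
    simpa [Prod.smul_mk, smul_comm c l] using this

lemma mul_clos_gfield_sub (hGreen : GreenPair Γ) {l : ℂ} {f : E}
    (hf : ((0 : F), f) ∈ closure (gfield Γ l)) : (f, l • f) ∈ adjR (A0 Γ) := by
  obtain ⟨x, hx, hlim⟩ := mem_closure_iff_seq_limit.mp hf
  rintro qq ⟨h', hq⟩
  choose u' hu' using hx
  have hun : Tendsto (fun n => (x n).1) atTop (nhds (0 : F)) :=
    (continuous_fst.tendsto _).comp hlim
  have hgn : Tendsto (fun n => (x n).2) atTop (nhds f) :=
    (continuous_snd.tendsto _).comp hlim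
  have hid : ∀ n, ⟪qq.2 - (starRingEnd ℂ) l • qq.1, (x n).2⟫ = ⟪h', (x n).1⟫ := by
    intro n
    exact green_A0 hGreen (by simpa using hq) (hu' n)
  have h1 : Tendsto (fun n => ⟪qq.2 - (starRingEnd ℂ) l • qq.1, (x n).2⟫) atTop
      (nhds ⟪qq.2 - (starRingEnd ℂ) l • qq.1, f⟫) :=
    Filter.Tendsto.inner (𝕜 := ℂ) tendsto_const_nhds hgn
  have h2 : Tendsto (fun n => (⟪h', (x n).1⟫ : ℂ)) atTop (nhds (0 : ℂ)) := by
    have := Filter.Tendsto.inner (𝕜 := ℂ) (tendsto_const_nhds (x := h')) hun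
    simpa using this
  have hz : ⟪qq.2 - (starRingEnd ℂ) l • qq.1, f⟫ = 0 := by
    have := tendsto_nhds_unique (h1.congr fun n => hid n) h2
    exact this
  have hz' : ⟪f, qq.2 - (starRingEnd ℂ) l • qq.1⟫ = 0 := inner_eq_zero_symm.mp hz
  simp only [inner_sub_right, inner_smul_right, inner_smul_left, Complex.conj_conj] at hz' ⊢
  linear_combination hz'

lemma adj_sub_mul_clos_gfield (hGreen : GreenPair Γ) (hGU : invR Γ = kreinAdj Γ)
    {l : ℂ} (hl : l.im ≠ 0) {f : E}
    (hf : (f, l • f) ∈ adjR (A0 Γ)) : ((0 : F), f) ∈ closure (gfield Γ l) := by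
  classical
  set eL := WithLp.prodContinuousLinearEquiv 2 ℂ F E with heL
  set s' : Set (WithLp 2 (F × E)) := eL ⁻¹' (gfield Γ l) with hs'
  have hlin : LinSet s' := by
    have h := LinSet.preimage eL.toLinearEquiv.toLinearMap (gfield_linSet hGU l); exact h
  have hz' : ((starRingEnd ℂ) l).im ≠ 0 := by simpa [Complex.conj_im] using hl
  have hsa := tA_sa hGU
  obtain ⟨ρl, hρl, _, _, _, _⟩ := hsa.resolvent hl
  obtain ⟨ρz, hρz, _, _, _, _⟩ := hsa.resolvent hz'
  have hmem : mkK (0 : F) f ∈ closure s' := by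
    refine mem_closure_of_orth hlin ?_
    intro y hy
    set w0 : F := e1 y with hw0
    set ee : E := e2 y with hee
    set P : WithLp 2 (E × F) := ρz (mkK ee ((starRingEnd ℂ) l • w0)) with hP
    -- For every w : F we get a gfield element
    have hgf : ∀ w : F, (w + l • e2 (ρl (mkK 0 w)), e1 (ρl (mkK 0 w))) ∈ gfield Γ l := by
      intro w
      have hG := hρl (mkK 0 w)
      have hmemΓ : ((e1 (ρl (mkK 0 w)), e1 (mkK (0:E) w + l • ρl (mkK 0 w))),
          (e2 (mkK (0:E) w + l • ρl (mkK 0 w)), e2 (ρl (mkK 0 w)))) ∈ Γ := hG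
      simp only [e1_add, e2_add, e1_mk, e2_mk, e1_smul, e2_smul, zero_add] at hmemΓ
      exact ⟨e2 (ρl (mkK 0 w)), hmemΓ⟩
    -- pairing identity gives e2 P = -w0
    have hq : e2 P = - w0 := by
      have hkey : ∀ w : F, ⟪e2 P + w0, w⟫ = 0 := by
        intro w
        have hpair := hsa.pair (hρz (mkK ee ((starRingEnd ℂ) l • w0))) (hρl (mkK 0 w))
        have horth := hy (eL.symm (w + l • e2 (ρl (mkK 0 w)), e1 (ρl (mkK 0 w))))
          (by
            show eL (eL.symm _) ∈ gfield Γ l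
            rw [eL.apply_symm_apply]
            exact hgf w)
        have horth' : ⟪w0, w + l • e2 (ρl (mkK 0 w))⟫ + ⟪ee, e1 (ρl (mkK 0 w))⟫ = 0 := horth
        rw [innerK, innerK] at hpair
        simp only [e1_add, e2_add, e1_mk, e2_mk, e1_smul, e2_smul, inner_add_left,
          inner_add_right, inner_smul_left, inner_smul_right, inner_zero_left,
          inner_zero_right, Complex.conj_conj, zero_add, add_zero] at hpair horth'
        rw [inner_add_left]
        linear_combination hpair + horth'
      have h0 := hkey (e2 P + w0)
      rw [inner_self_eq_zero] at h0
      exact eq_neg_of_add_eq_zero_left h0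
    -- P gives an element of A0
    have hPA0 : (e1 P, ee + (starRingEnd ℂ) l • e1 P) ∈ A0 Γ := by
      have hG := hρz (mkK ee ((starRingEnd ℂ) l • w0))
      have hmemΓ : ((e1 P, e1 (mkK ee ((starRingEnd ℂ) l • w0) + (starRingEnd ℂ) l • P)),
          (e2 (mkK ee ((starRingEnd ℂ) l • w0) + (starRingEnd ℂ) l • P), e2 P)) ∈ Γ := hG
      simp only [e1_add, e2_add, e1_mk, e2_mk, e1_smul, e2_smul] at hmemΓ
      rw [hq] at hmemΓ
      have hzero : (starRingEnd ℂ) l • w0 + (starRingEnd ℂ) l • (- w0) = 0 := by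
        rw [smul_neg, add_neg_cancel]
      rw [hzero] at hmemΓ
      show ∃ h' : F, ((e1 P, ee + (starRingEnd ℂ) l • e1 P), ((0 : F), h')) ∈ Γ
      exact ⟨-w0, hmemΓ⟩
    have hfe : ⟪f, ee⟫ = 0 := by
      have := hf _ hPA0
      simp only [inner_add_right, inner_smul_right, inner_smul_left] at this
      linear_combination this
    rw [innerK]
    simp only [e1_mk, e2_mk, inner_zero_right, zero_add]
    exact inner_eq_zero_symm.mp hfe
  have hpre : eL ⁻¹' (closure (gfield Γ l)) = closure s' := by
    rw [hs']
    exact eL.toHomeomorph.preimage_closure _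
  have : mkK (0 : F) f ∈ eL ⁻¹' (closure (gfield Γ l)) := by
    rw [hpre]
    exact hmem
  exact this

lemma sub_conj_ne {l : ℂ} (hl : l.im ≠ 0) : l - (starRingEnd ℂ) l ≠ 0 := by
  rw [Complex.sub_conj]
  intro hc
  rcases mul_eq_zero.mp hc with hc | hc
  · rw [Complex.ofReal_eq_zero] at hc
    norm_num at hc
    exact hl hc
  · exact Complex.I_ne_zero hc

lemma ranShift_linSet {T : Set (E × E)} (hT : LinSet T) (l : ℂ) :
    LinSet (ranR (shiftSub T l)) := by
  refine ⟨mem_ranShift.mpr ⟨0, hT.1, by simp⟩, ?_, ?_⟩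
  · intro p hp q hq
    obtain ⟨a, ha, rfl⟩ := mem_ranShift.mp hp
    obtain ⟨b, hb, rfl⟩ := mem_ranShift.mp hq
    refine mem_ranShift.mpr ⟨a + b, hT.2.1 _ ha _ hb, ?_⟩
    simp only [Prod.fst_add, Prod.snd_add, smul_add]
    abel
  · intro c p hp
    obtain ⟨a, ha, rfl⟩ := mem_ranShift.mp hp
    refine mem_ranShift.mpr ⟨c • a, hT.2.2 c _ ha, ?_⟩
    simp only [Prod.smul_fst, Prod.smul_snd, smul_sub, smul_comm c l]

lemma A0_closure_sub_adj (hGreen : GreenPair Γ) : closure (A0 Γ) ⊆ adjR (A0 Γ) :=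
  closure_minimal (fun p hp q hq => A0_sym hGreen p hp q hq) (adjRS_isClosed _)

lemma selfadj_dense (hGreen : GreenPair Γ) (hGU : invR Γ = kreinAdj Γ)
    (hDi : closure (A0 Γ) = adjR (A0 Γ)) {l : ℂ} (hl : l.im ≠ 0) :
    Dense (ranR (shiftSub (A0 Γ) l)) := by
  refine dense_of_orth (ranShift_linSet (A0_linSet hGU) l) ?_
  intro w hw
  have hadj : (w, (starRingEnd ℂ) l • w) ∈ adjR (A0 Γ) := by
    rw [adj_shift_orth]
    intro v hv
    rw [Complex.conj_conj] at hv
    exact hw v hv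
  have hmem : (w, (starRingEnd ℂ) l • w) ∈ closure (A0 Γ) := by rw [hDi]; exact hadj
  have hpair := adjRS_pair_closure (hadj : (w, (starRingEnd ℂ) l • w) ∈ adjRS (A0 Γ)) hmem
  simp only [inner_smul_left, inner_smul_right, Complex.conj_conj] at hpair
  have hws : ⟪w, w⟫ = 0 := by
    rcases mul_eq_zero.mp (show (l - (starRingEnd ℂ) l) * ⟪w, w⟫ = 0 by
      linear_combination -hpair) with hc | hc
    · exact absurd hc (sub_conj_ne hl)
    · exact hc
  exact inner_self_eq_zero.mp hws

lemma defect_selfadj (hGreen : GreenPair Γ) (hGU : invR Γ = kreinAdj Γ)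
    (hI : ∀ w : E, (w, Complex.I • w) ∈ adjR (A0 Γ) → w = 0)
    (hmI : ∀ w : E, (w, (-Complex.I) • w) ∈ adjR (A0 Γ) → w = 0) :
    closure (A0 Γ) = adjR (A0 Γ) := by
  apply Set.Subset.antisymm (A0_closure_sub_adj hGreen)
  intro p hp
  set eL := WithLp.prodContinuousLinearEquiv 2 ℂ E E with heL
  set s' : Set (WithLp 2 (E × E)) := eL ⁻¹' (A0 Γ) with hs'
  have hlin : LinSet s' := by
    have h := LinSet.preimage eL.toLinearEquiv.toLinearMap (A0_linSet hGU); exact h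
  obtain ⟨y, hy, horth⟩ := exists_orth_decomp hlin (eL.symm p)
  have hyc : eL y ∈ closure (A0 Γ) := by
    have hpre : eL ⁻¹' (closure (A0 Γ)) = closure s' := eL.toHomeomorph.preimage_closure _
    have hyy : y ∈ eL ⁻¹' (closure (A0 Γ)) := by rw [hpre]; exact hy
    exact hyy
  set d := eL.symm p - y with hd
  set h := e1 d with hh
  set k := e2 d with hk
  have hsplit : p = eL y + (h, k) := by
    have h1 : eL (eL.symm p) = p := eL.apply_symm_apply p
    have h2 : y + d = eL.symm p := by rw [hd]; abel
    have h3 : eL (y + d) = eL y + eL d := map_add eL y d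
    have h4 : eL d = (h, k) := rfl
    rw [← h1, ← h2, h3, h4]
  have hyadj : eL y ∈ adjR (A0 Γ) := A0_closure_sub_adj hGreen hyc
  have hkadj : (h, k) ∈ adjR (A0 Γ) := by
    have hsub := (adjRS_linSet (A0 Γ)).sub (hp : p ∈ adjRS (A0 Γ)) hyadj
    have : p - eL y = (h, k) := by rw [hsplit]; abel
    rwa [this] at hsub
  have horthA : ∀ q ∈ A0 Γ, ⟪h, q.1⟫ + ⟪k, q.2⟫ = 0 := by
    intro q hq
    have hqs : eL.symm q ∈ closure s' := subset_closure (by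
      show eL (eL.symm q) ∈ A0 Γ
      rw [eL.apply_symm_apply]
      exact hq)
    have := horth (eL.symm q) hqs
    have hexp : ⟪d, eL.symm q⟫ = ⟪h, q.1⟫ + ⟪k, q.2⟫ := by
      rw [innerK]
      rfl
    rw [← hexp]
    exact this
  have hkh : (k, -h) ∈ adjR (A0 Γ) := by
    intro q hq
    have h0 := horthA q hq
    simp only [inner_neg_left]
    linear_combination h0
  have hw1mem : (h + Complex.I • k, (-Complex.I) • (h + Complex.I • k)) ∈ adjR (A0 Γ) := by
    have hsum := (adjRS_linSet (A0 Γ)).2.1 _ hkadj _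
      ((adjRS_linSet (A0 Γ)).2.2 Complex.I _ hkh)
    have heq : ((h, k) : E × E) + Complex.I • ((k, -h) : E × E)
        = (h + Complex.I • k, (-Complex.I) • (h + Complex.I • k)) := by
      rw [Prod.smul_mk, Prod.mk_add_mk]
      congr 1
      rw [smul_add, smul_smul, neg_mul, Complex.I_mul_I, smul_neg]
      simp
      abel
    rwa [heq] at hsum
  have hw2mem : (h - Complex.I • k, Complex.I • (h - Complex.I • k)) ∈ adjR (A0 Γ) := by
    have hsum := (adjRS_linSet (A0 Γ)).sub hkadj
      ((adjRS_linSet (A0 Γ)).2.2 Complex.I _ hkh)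
    have heq : ((h, k) : E × E) - Complex.I • ((k, -h) : E × E)
        = (h - Complex.I • k, Complex.I • (h - Complex.I • k)) := by
      rw [Prod.smul_mk, Prod.mk_sub_mk]
      congr 1
      rw [smul_sub, smul_smul, Complex.I_mul_I, smul_neg]
      simp [sub_eq_add_neg]
      abel
    rwa [heq] at hsum
  have hw1 : h + Complex.I • k = 0 := hmI _ hw1mem
  have hw2 : h - Complex.I • k = 0 := hI _ hw2mem
  have h0 : h = 0 := by
    have : (2 : ℂ) • h = 0 := by
      have := congrArg₂ (· + ·) hw1 hw2
      simpa [two_smul] using by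
        have h3 : (h + Complex.I • k) + (h - Complex.I • k) = h + h := by abel
        rw [← h3, hw1, hw2]; simp
    have h2 : (2 : ℂ) ≠ 0 := two_ne_zero
    exact (smul_eq_zero.mp this).resolve_left h2
  have k0 : k = 0 := by
    have : Complex.I • k = 0 := by
      have := hw1
      rw [h0, zero_add] at this
      exact this
    exact (smul_eq_zero.mp this).resolve_left Complex.I_ne_zero
  rw [hsplit, h0, k0]
  have : ((0 : E), (0 : E)) = (0 : E × E) := rfl
  rw [this, add_zero]
  exact hyc

lemma K_ext {E' F' : Type*} [NormedAddCommGroup E'] [InnerProductSpace ℂ E']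
    [NormedAddCommGroup F'] [InnerProductSpace ℂ F'] {x y : WithLp 2 (E' × F')}
    (h1 : e1 x = e1 y) (h2 : e2 x = e2 y) : x = y := by
  rw [← mk_eta x, ← mk_eta y, h1, h2]

lemma tA_gfield {l : ℂ} {B : WithLp 2 (E × F)} {w : F}
    (hB : (B, mkK (0 : E) w + l • B) ∈ tA Γ) :
    (w + l • e2 B, e1 B) ∈ gfield Γ l := by
  have hmemΓ : ((e1 B, e1 (mkK (0:E) w + l • B)), (e2 (mkK (0:E) w + l • B), e2 B)) ∈ Γ := hB
  simp only [e1_add, e2_add, e1_mk, e2_mk, e1_smul, e2_smul, zero_add] at hmemΓ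
  exact ⟨e2 B, hmemΓ⟩

lemma dom_clos_gfield_sub_ran (l : ℂ) :
    domR (closure (gfield Γ l)) ⊆ ranR (closure (G0 Γ)) := by
  rintro u ⟨g, hg⟩
  obtain ⟨x, hx, hlim⟩ := mem_closure_iff_seq_limit.mp hg
  choose h' hh' using hx
  have h1 : Tendsto (fun n => (x n).1) atTop (nhds u) := (continuous_fst.tendsto _).comp hlim
  have h2 : Tendsto (fun n => (x n).2) atTop (nhds g) := (continuous_snd.tendsto _).comp hlim
  refine ⟨(g, l • g), ?_⟩
  have hmem : ∀ n, ((((x n).2, l • (x n).2), (x n).1) : (E × E) × F) ∈ G0 Γ :=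
    fun n => ⟨h' n, hh' n⟩
  have htend : Tendsto (fun n => ((((x n).2, l • (x n).2), (x n).1) : (E × E) × F)) atTop
      (nhds (((g, l • g), u))) :=
    ((h2.prodMk_nhds (h2.const_smul l)).prodMk_nhds h1)
  exact mem_closure_of_tendsto htend (Filter.Eventually.of_forall hmem)

set_option maxHeartbeats 2000000 in
lemma ran_closG0_sub_dom (hGreen : GreenPair Γ) (hGU : invR Γ = kreinAdj Γ)
    {l : ℂ} (hl : l.im ≠ 0) (hdense : Dense (ranR (shiftSub (A0 Γ) l))) :
    ranR (closure (G0 Γ)) ⊆ domR (closure (gfield Γ l)) := by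
  classical
  rintro u ⟨fp, hfp⟩
  obtain ⟨x, hx, hlim⟩ := mem_closure_iff_seq_limit.mp hfp
  choose u1 hu1 using hx
  have hsa := tA_sa hGU
  obtain ⟨ρ, hρ, huniq, hadd, hneg, hcont⟩ := hsa.resolvent hl
  have hclos : LinSet (closure (gfield Γ l)) := (gfield_linSet hGU l).closure
  -- first family
  have hXY : ∀ n, ((mkK (x n).1.1 (u1 n) : WithLp 2 (E × F)), mkK (x n).1.2 (x n).2) ∈ tA Γ :=
    fun n => hu1 n
  have hXeq : ∀ n, (mkK (x n).1.1 (u1 n) : WithLp 2 (E × F))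
      = ρ (mkK ((x n).1.2 - l • (x n).1.1) 0) + ρ (mkK 0 ((x n).2 - l • u1 n)) := by
    intro n
    rw [← hadd]
    refine huniq _ _ ?_
    have hsum : (mkK ((x n).1.2 - l • (x n).1.1) 0 + mkK 0 ((x n).2 - l • u1 n)
        : WithLp 2 (E × F)) = mkK (x n).1.2 (x n).2 - l • mkK (x n).1.1 (u1 n) := by
      refine K_ext ?_ ?_
      · rw [e1_add, e1_mk, e1_mk, e1_sub, e1_mk, e1_smul, e1_mk, add_zero]
      · rw [e2_add, e2_mk, e2_mk, e2_sub, e2_mk, e2_smul, e2_mk, zero_add]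
    rw [hsum, sub_add_cancel]
    exact hXY n
  have hgf1 : ∀ n, ((x n).2 - l • e2 (ρ (mkK ((x n).1.2 - l • (x n).1.1) 0)),
      (x n).1.1 - e1 (ρ (mkK ((x n).1.2 - l • (x n).1.1) 0))) ∈ gfield Γ l := by
    intro n
    have hB := hρ (mkK 0 ((x n).2 - l • u1 n))
    have hmem := tA_gfield (Γ := Γ) hB
    have hcg2 := congrArg e2 (hXeq n)
    rw [e2_mk, e2_add] at hcg2
    have he2 : e2 (ρ (mkK 0 ((x n).2 - l • u1 n)))
        = u1 n - e2 (ρ (mkK ((x n).1.2 - l • (x n).1.1) 0)) :=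
      eq_sub_of_add_eq' hcg2.symm
    have hcg1 := congrArg e1 (hXeq n)
    rw [e1_mk, e1_add] at hcg1
    have he1 : e1 (ρ (mkK 0 ((x n).2 - l • u1 n)))
        = (x n).1.1 - e1 (ρ (mkK ((x n).1.2 - l • (x n).1.1) 0)) :=
      eq_sub_of_add_eq' hcg1.symm
    rw [he2, he1] at hmem
    have harg : (x n).2 - l • u1 n
        + l • (u1 n - e2 (ρ (mkK ((x n).1.2 - l • (x n).1.1) 0)))
        = (x n).2 - l • e2 (ρ (mkK ((x n).1.2 - l • (x n).1.1) 0)) := by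
      rw [smul_sub]; abel
    rwa [harg] at hmem
  -- limits of x components
  have hx1t : Tendsto (fun n => (x n).1.1) atTop (nhds fp.1) :=
    ((continuous_fst.comp continuous_fst).tendsto _).comp hlim
  have hx2t : Tendsto (fun n => (x n).1.2) atTop (nhds fp.2) :=
    ((continuous_snd.comp continuous_fst).tendsto _).comp hlim
  have hut : Tendsto (fun n => (x n).2) atTop (nhds u) :=
    (continuous_snd.tendsto _).comp hlim
  have hAt : Tendsto (fun n => ρ (mkK ((x n).1.2 - l • (x n).1.1) 0)) atTop
      (nhds (ρ (mkK (fp.2 - l • fp.1) 0))) := by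
    have hpair : Tendsto (fun n => (((x n).1.2 - l • (x n).1.1 : E), (0 : F))) atTop
        (nhds ((fp.2 - l • fp.1 : E), (0 : F))) :=
      (hx2t.sub (hx1t.const_smul l)).prodMk_nhds tendsto_const_nhds
    exact (hcont.tendsto _).comp ((continuous_mkK.tendsto _).comp hpair)
  have hcl1 : (u - l • e2 (ρ (mkK (fp.2 - l • fp.1) 0)),
      fp.1 - e1 (ρ (mkK (fp.2 - l • fp.1) 0))) ∈ closure (gfield Γ l) := by
    have he2t := (continuous_e2.tendsto _).comp hAt
    have he1t := (continuous_e1.tendsto _).comp hAt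
    have htend := (hut.sub (he2t.const_smul l)).prodMk_nhds (hx1t.sub he1t)
    exact mem_closure_of_tendsto htend (Filter.Eventually.of_forall hgf1)
  -- second family via density
  have he_clos : fp.2 - l • fp.1 ∈ closure (ranR (shiftSub (A0 Γ) l)) := by
    rw [dense_iff_closure_eq.mp hdense]; trivial
  obtain ⟨v, hv, hvlim⟩ := mem_closure_iff_seq_limit.mp he_clos
  have hv' : ∀ m, ∃ q ∈ A0 Γ, q.2 - l • q.1 = v m := fun m => mem_ranShift.mp (hv m)
  choose q hqA0 hqv using hv'
  choose h1m hh1m using fun m => (hqA0 m : q m ∈ A0 Γ)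
  have hX'Y : ∀ m, ((mkK (q m).1 (h1m m) : WithLp 2 (E × F)), mkK (q m).2 0) ∈ tA Γ :=
    fun m => hh1m m
  have hX'eq : ∀ m, (mkK (q m).1 (h1m m) : WithLp 2 (E × F))
      = ρ (mkK (v m) 0) + ρ (- (mkK 0 (l • h1m m))) := by
    intro m
    rw [← hadd]
    refine huniq _ _ ?_
    have hsum : (mkK (v m) 0 + (- (mkK 0 (l • h1m m))) : WithLp 2 (E × F))
        = mkK (q m).2 0 - l • mkK (q m).1 (h1m m) := by
      refine K_ext ?_ ?_
      · rw [e1_add, e1_mk, e1_neg, e1_mk, e1_sub, e1_mk, e1_smul, e1_mk, ← hqv m]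
        abel
      · rw [e2_add, e2_mk, e2_neg, e2_mk, e2_sub, e2_mk, e2_smul, e2_mk]
        abel
    rw [hsum, sub_add_cancel]
    exact hX'Y m
  have hgf2 : ∀ m, ((l • e2 (ρ (mkK (v m) 0)) : F), e1 (ρ (mkK (v m) 0)) - (q m).1)
      ∈ gfield Γ l := by
    intro m
    have hB := hρ (mkK 0 (l • h1m m))
    have hmem := tA_gfield (Γ := Γ) hB
    have hCm : ρ (mkK 0 (l • h1m m)) = ρ (mkK (v m) 0) - mkK (q m).1 (h1m m) := by
      have hXe := hX'eq m
      rw [hneg] at hXe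
      rw [hXe]
      abel
    rw [hCm] at hmem
    have he2' : e2 ((ρ (mkK (v m) 0) - mkK (q m).1 (h1m m) : WithLp 2 (E × F)))
        = e2 (ρ (mkK (v m) 0)) - h1m m := by
      rw [e2_sub, e2_mk]
    have he1' : e1 ((ρ (mkK (v m) 0) - mkK (q m).1 (h1m m) : WithLp 2 (E × F)))
        = e1 (ρ (mkK (v m) 0)) - (q m).1 := by
      rw [e1_sub, e1_mk]
    rw [he2', he1'] at hmem
    have harg : l • h1m m + l • (e2 (ρ (mkK (v m) 0)) - h1m m) = l • e2 (ρ (mkK (v m) 0)) := by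
      rw [smul_sub]; abel
    rwa [harg] at hmem
  have hq1c : CauchySeq (fun m => (q m).1) :=
    cauchy_of_shift (A0_sym' hGreen) (A0_linSet hGU) hl hqA0 hqv hvlim.cauchySeq
  obtain ⟨qinf, hqinf⟩ := cauchySeq_tendsto_of_complete hq1c
  have hρvt : Tendsto (fun m => ρ (mkK (v m) 0)) atTop (nhds (ρ (mkK (fp.2 - l • fp.1) 0))) := by
    have hpair : Tendsto (fun m => ((v m : E), (0 : F))) atTop
        (nhds ((fp.2 - l • fp.1 : E), (0 : F))) :=
      hvlim.prodMk_nhds tendsto_const_nhds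
    exact (hcont.tendsto _).comp ((continuous_mkK.tendsto _).comp hpair)
  have hcl2 : ((l • e2 (ρ (mkK (fp.2 - l • fp.1) 0)) : F),
      e1 (ρ (mkK (fp.2 - l • fp.1) 0)) - qinf) ∈ closure (gfield Γ l) := by
    have he2t := (continuous_e2.tendsto _).comp hρvt
    have he1t := (continuous_e1.tendsto _).comp hρvt
    have htend := (he2t.const_smul l).prodMk_nhds (he1t.sub hqinf)
    exact mem_closure_of_tendsto htend (Filter.Eventually.of_forall hgf2)
  -- sum
  have hsum := hclos.2.1 _ hcl1 _ hcl2
  have heq : ((u - l • e2 (ρ (mkK (fp.2 - l • fp.1) 0)),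
        fp.1 - e1 (ρ (mkK (fp.2 - l • fp.1) 0))) : F × E)
      + ((l • e2 (ρ (mkK (fp.2 - l • fp.1) 0)) : F),
        e1 (ρ (mkK (fp.2 - l • fp.1) 0)) - qinf)
      = (u, fp.1 - qinf) := by
    rw [Prod.mk_add_mk]
    congr 1 <;> abel
  rw [heq] at hsum
  exact ⟨fp.1 - qinf, hsum⟩

lemma weyl_sub_mem {l : ℂ} (hGU : invR Γ = kreinAdj Γ) {ga gb : E} {ua ub va vb : F}
    (ha : ((ga, l • ga), (ua, va)) ∈ Γ) (hb : ((gb, l • gb), (ub, vb)) ∈ Γ) :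
    ((ga - gb, l • (ga - gb)), (ua - ub, va - vb)) ∈ Γ := by
  have := (Gamma_linSet hGU).sub ha hb
  simpa [Prod.mk_sub_mk, smul_sub] using this

lemma formClosable_iff (hGreen : GreenPair Γ) (hGU : invR Γ = kreinAdj Γ)
    {l : ℂ} (hl : l.im ≠ 0) :
    FormClosable l (weyl Γ l) ↔ mulR (closure (gfield Γ l)) = {0} := by
  constructor
  · intro hFC
    apply Set.eq_of_subset_of_subset
    · intro f hf
      obtain ⟨x, hx, hlim⟩ := mem_closure_iff_seq_limit.mp hf
      choose u' hu' using hx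
      have hw : ∀ n, ((x n).1, u' n) ∈ weyl Γ l := fun n => ⟨(x n).2, hu' n⟩
      have hun : Tendsto (fun n => (x n).1) atTop (nhds (0 : F)) :=
        (continuous_fst.tendsto _).comp hlim
      have hgn : Tendsto (fun n => (x n).2) atTop (nhds f) :=
        (continuous_snd.tendsto _).comp hlim
      have hdiff : ∀ nm : ℕ × ℕ, formVal l ((x nm.1).1 - (x nm.2).1) (u' nm.1 - u' nm.2)
          = ‖(x nm.1).2 - (x nm.2).2‖ ^ 2 := fun nm =>
        weyl_normsq hGreen hl (weyl_sub_mem hGU (hu' nm.1) (hu' nm.2))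
      have hcau := normsq_tendsto_of_cauchy hgn.cauchySeq
      have h0 := hFC (fun n => (x n).1) u' hw hun (hcau.congr fun nm => (hdiff nm).symm)
      have h1 : Tendsto (fun n => ‖(x n).2‖ ^ 2) atTop (nhds 0) :=
        h0.congr fun n => weyl_normsq hGreen hl (hu' n)
      have h2 : Tendsto (fun n => ‖(x n).2‖ ^ 2) atTop (nhds (‖f‖ ^ 2)) := by
        have := ((continuous_pow 2).comp continuous_norm).tendsto f
        exact this.comp hgn
      have hfz : ‖f‖ ^ 2 = 0 := tendsto_nhds_unique h2 h1
      have : f = 0 := by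
        rw [pow_eq_zero_iff (by norm_num : 2 ≠ 0)] at hfz
        exact norm_eq_zero.mp hfz
      simp [this]
    · intro f hf
      rw [Set.mem_singleton_iff] at hf
      rw [hf]
      exact subset_closure (gfield_linSet hGU l).1
  · intro hmul
    intro uu uu' hw hu0 hcauchy
    choose g hg using hw
    have hdiff : ∀ nm : ℕ × ℕ, formVal l (uu nm.1 - uu nm.2) (uu' nm.1 - uu' nm.2)
        = ‖g nm.1 - g nm.2‖ ^ 2 := fun nm =>
      weyl_normsq hGreen hl (weyl_sub_mem hGU (hg nm.1) (hg nm.2))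
    have hcau : CauchySeq g := cauchySeq_of_normsq (hcauchy.congr hdiff)
    obtain ⟨f, hf⟩ := cauchySeq_tendsto_of_complete hcau
    have hmemseq : ∀ n, ((uu n, g n) : F × E) ∈ gfield Γ l := fun n => ⟨uu' n, hg n⟩
    have hmem : ((0 : F), f) ∈ closure (gfield Γ l) :=
      mem_closure_of_tendsto (hu0.prodMk_nhds hf) (Filter.Eventually.of_forall hmemseq)
    have hf0 : f = 0 := by
      have : f ∈ mulR (closure (gfield Γ l)) := hmem
      rw [hmul] at this
      exact this
    have h1 : Tendsto (fun n => ‖g n‖ ^ 2) atTop (nhds 0) := by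
      have := ((continuous_pow 2).comp continuous_norm).tendsto f
      have h2 := this.comp hf
      rw [hf0] at h2
      simpa [Function.comp_def] using h2
    exact h1.congr fun n => (weyl_normsq hGreen hl (hg n)).symm

lemma formClosureDom_eq (hGreen : GreenPair Γ) (hGU : invR Γ = kreinAdj Γ)
    {l : ℂ} (hl : l.im ≠ 0) :
    formClosureDom l (weyl Γ l) = domR (closure (gfield Γ l)) := by
  apply Set.eq_of_subset_of_subset
  · rintro v ⟨uu, uu', hw, hulim, hcauchy⟩
    choose g hg using hw
    have hdiff : ∀ nm : ℕ × ℕ, formVal l (uu nm.1 - uu nm.2) (uu' nm.1 - uu' nm.2)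
        = ‖g nm.1 - g nm.2‖ ^ 2 := fun nm =>
      weyl_normsq hGreen hl (weyl_sub_mem hGU (hg nm.1) (hg nm.2))
    have hcau : CauchySeq g := cauchySeq_of_normsq (hcauchy.congr hdiff)
    obtain ⟨f, hf⟩ := cauchySeq_tendsto_of_complete hcau
    have hmemseq : ∀ n, ((uu n, g n) : F × E) ∈ gfield Γ l := fun n => ⟨uu' n, hg n⟩
    exact ⟨f, mem_closure_of_tendsto (hulim.prodMk_nhds hf)
      (Filter.Eventually.of_forall hmemseq)⟩
  · rintro v ⟨f, hf⟩
    obtain ⟨x, hx, hlim⟩ := mem_closure_iff_seq_limit.mp hf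
    choose u' hu' using hx
    have hun : Tendsto (fun n => (x n).1) atTop (nhds v) :=
      (continuous_fst.tendsto _).comp hlim
    have hgn : Tendsto (fun n => (x n).2) atTop (nhds f) :=
      (continuous_snd.tendsto _).comp hlim
    refine ⟨fun n => (x n).1, u', fun n => ⟨(x n).2, hu' n⟩, hun, ?_⟩
    have hdiff : ∀ nm : ℕ × ℕ, formVal l ((x nm.1).1 - (x nm.2).1) (u' nm.1 - u' nm.2)
        = ‖(x nm.1).2 - (x nm.2).2‖ ^ 2 := fun nm =>
      weyl_normsq hGreen hl (weyl_sub_mem hGU (hu' nm.1) (hu' nm.2))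
    exact (normsq_tendsto_of_cauchy hgn.cauchySeq).congr fun nm => (hdiff nm).symm

end Core

/-- characterizations of ES-generalized boundary triples (essential
selfadjointness of `A₀`) via closability of the γ-field and of the forms `t_{M(λ)}`,
together with the identification of the common (form) domains. -/
theorem statement16 (A : Set (E × E)) (Γ : Set ((E × E) × (F × F)))
    (hA : IsClosedSymRel A) (hU : IsUnitaryBT A Γ) :
    -- (i) and the equivalent range-density formulation
    ((closure (A0 Γ) = adjR (A0 Γ)) ↔
       (∀ l : ℂ, l.im ≠ 0 → Dense (ranR (shiftSub (A0 Γ) l)))) ∧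
    -- (i) ↔ (ii)
    ((closure (A0 Γ) = adjR (A0 Γ)) ↔
       (mulR (closure (gfield Γ Complex.I)) = {(0 : E)} ∧
        mulR (closure (gfield Γ (-Complex.I))) = {(0 : E)})) ∧
    -- (i) ↔ (iii)
    ((closure (A0 Γ) = adjR (A0 Γ)) ↔
       (∀ l : ℂ, l.im ≠ 0 → mulR (closure (gfield Γ l)) = {(0 : E)} ∧
          (0 < l.im →
            domR (closure (gfield Γ l)) = domR (closure (gfield Γ Complex.I))) ∧
          (l.im < 0 →
            domR (closure (gfield Γ l)) = domR (closure (gfield Γ (-Complex.I)))))) ∧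
    -- (i) ↔ (iv)
    ((closure (A0 Γ) = adjR (A0 Γ)) ↔
       (FormClosable Complex.I (weyl Γ Complex.I) ∧
        FormClosable (-Complex.I) (weyl Γ (-Complex.I)))) ∧
    -- (i) ↔ (v)
    ((closure (A0 Γ) = adjR (A0 Γ)) ↔
       (∀ l : ℂ, l.im ≠ 0 → FormClosable l (weyl Γ l) ∧
          (0 < l.im →
            formClosureDom l (weyl Γ l) = formClosureDom Complex.I (weyl Γ Complex.I)) ∧
          (l.im < 0 →
            formClosureDom l (weyl Γ l) =
              formClosureDom (-Complex.I) (weyl Γ (-Complex.I))))) ∧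
    -- moreover
    ((closure (A0 Γ) = adjR (A0 Γ)) →
       ∀ l : ℂ, l.im ≠ 0 →
         formClosureDom l (weyl Γ l) = domR (closure (gfield Γ l)) ∧
         domR (closure (gfield Γ l)) = ranR (closure (G0 Γ))) := by
  classical
  obtain ⟨⟨hGreen, hdomsub, hdd, hGU⟩, hmulG⟩ := hU
  have hIim : (Complex.I).im ≠ 0 := by simp
  have hmIim : (-Complex.I).im ≠ 0 := by simp
  -- (i) implies density of all shifted ranges
  have h1 : closure (A0 Γ) = adjR (A0 Γ) →
      ∀ l : ℂ, l.im ≠ 0 → Dense (ranR (shiftSub (A0 Γ) l)) :=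
    fun h l hl => selfadj_dense hGreen hGU h hl
  -- (i) implies closability of all gamma fields
  have h2 : closure (A0 Γ) = adjR (A0 Γ) →
      ∀ l : ℂ, l.im ≠ 0 → mulR (closure (gfield Γ l)) = {0} := by
    intro h l hl
    apply Set.eq_of_subset_of_subset
    · intro f hf
      have hadj := mul_clos_gfield_sub hGreen (hf : ((0 : F), f) ∈ closure (gfield Γ l))
      have hd := h1 h ((starRingEnd ℂ) l) (by simpa [Complex.conj_im] using hl)
      have hz := orth_zero_of_dense hd (adj_shift_orth.mp hadj)
      simp [hz]
    · intro f hf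
      rw [Set.mem_singleton_iff] at hf
      rw [hf]
      exact subset_closure (gfield_linSet hGU l).1
  -- closability of the gamma field at l kills the defect at l
  have h3 : ∀ l : ℂ, l.im ≠ 0 → mulR (closure (gfield Γ l)) = {0} →
      ∀ w : E, (w, l • w) ∈ adjR (A0 Γ) → w = 0 := by
    intro l hl hm w hw
    have hmem : ((0 : F), w) ∈ closure (gfield Γ l) :=
      adj_sub_mul_clos_gfield hGreen hGU hl hw
    have hw' : w ∈ mulR (closure (gfield Γ l)) := hmem
    rw [hm] at hw'
    exact hw'
  -- defect triviality at ±i gives (i)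
  have h5 : mulR (closure (gfield Γ Complex.I)) = {0} →
      mulR (closure (gfield Γ (-Complex.I))) = {0} →
      closure (A0 Γ) = adjR (A0 Γ) := by
    intro ha hb
    exact defect_selfadj hGreen hGU (h3 Complex.I hIim ha) (h3 (-Complex.I) hmIim hb)
  -- density of all ranges gives (i)
  have h4 : (∀ l : ℂ, l.im ≠ 0 → Dense (ranR (shiftSub (A0 Γ) l))) →
      closure (A0 Γ) = adjR (A0 Γ) := by
    intro hd
    refine defect_selfadj hGreen hGU ?_ ?_
    · intro w hw
      have horth := adj_shift_orth.mp hw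
      rw [Complex.conj_I] at horth
      exact orth_zero_of_dense (hd (-Complex.I) hmIim) horth
    · intro w hw
      have horth := adj_shift_orth.mp hw
      rw [map_neg, Complex.conj_I, neg_neg] at horth
      exact orth_zero_of_dense (hd Complex.I hIim) horth
  -- (i) implies identification of domains
  have h6 : closure (A0 Γ) = adjR (A0 Γ) → ∀ l : ℂ, l.im ≠ 0 →
      domR (closure (gfield Γ l)) = ranR (closure (G0 Γ)) := by
    intro h l hl
    exact Set.eq_of_subset_of_subset (dom_clos_gfield_sub_ran l)
      (ran_closG0_sub_dom hGreen hGU hl (h1 h l hl))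
  refine ⟨⟨fun h l hl => h1 h l hl, h4⟩, ?_, ?_, ?_, ?_, ?_⟩
  · -- (i) ↔ (ii)
    exact ⟨fun h => ⟨h2 h Complex.I hIim, h2 h (-Complex.I) hmIim⟩, fun h => h5 h.1 h.2⟩
  · -- (i) ↔ (iii)
    constructor
    · intro h l hl
      refine ⟨h2 h l hl, fun _ => ?_, fun _ => ?_⟩
      · rw [h6 h l hl, h6 h Complex.I hIim]
      · rw [h6 h l hl, h6 h (-Complex.I) hmIim]
    · intro hy
      exact h5 (hy Complex.I hIim).1 (hy (-Complex.I) hmIim).1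
  · -- (i) ↔ (iv)
    constructor
    · intro h
      exact ⟨(formClosable_iff hGreen hGU hIim).mpr (h2 h Complex.I hIim),
        (formClosable_iff hGreen hGU hmIim).mpr (h2 h (-Complex.I) hmIim)⟩
    · intro h
      exact h5 ((formClosable_iff hGreen hGU hIim).mp h.1)
        ((formClosable_iff hGreen hGU hmIim).mp h.2)
  · -- (i) ↔ (v)
    constructor
    · intro h l hl
      refine ⟨(formClosable_iff hGreen hGU hl).mpr (h2 h l hl), fun _ => ?_, fun _ => ?_⟩
      · rw [formClosureDom_eq hGreen hGU hl, formClosureDom_eq hGreen hGU hIim,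
          h6 h l hl, h6 h Complex.I hIim]
      · rw [formClosureDom_eq hGreen hGU hl, formClosureDom_eq hGreen hGU hmIim,
          h6 h l hl, h6 h (-Complex.I) hmIim]
    · intro hy
      exact h5 ((formClosable_iff hGreen hGU hIim).mp (hy Complex.I hIim).1)
        ((formClosable_iff hGreen hGU hmIim).mp (hy (-Complex.I) hmIim).1)
  · -- moreover
    intro h l hl
    exact ⟨formClosureDom_eq hGreen hGU hl, h6 h l hl⟩


end BT
end
end
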